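/- arXiv:2301.10380 — 6 statements merged into one kernel-verified Lean document; each statement's English description precedes it below -/
import Mathlib

section
/- Every rayless tree T contains a finite subtree that is invariant under every automorphism of T; consequently, every rayless tree has either a vertex or an edge fixed (setwise, for the edge) by all automorphisms. -/
open SimpleGraph

universe u

variable {V : Type u}

/-- `S` is an asymmetrizing set of `G`: the only automorphism of `G`
preserving `S` setwise is the identity. -/
def IsAsymmetrizing (G : SimpleGraph V) (S : Set V) : Prop :=
  ∀ φ : G ≃g G, (∀ v, φ v ∈ S ↔ v ∈ S) → ∀ v, φ v = v

/-- The number of pairwise inequivalent asymmetrizing sets of `G`,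
where two asymmetrizing sets are equivalent if some automorphism maps one onto the other. -/
noncomputable def asymNumber (G : SimpleGraph V) : Cardinal.{u} :=
  Cardinal.mk (Quot (fun S S' : {S : Set V // IsAsymmetrizing G S} =>
    ∃ φ : G ≃g G, (fun v => φ v) '' S.1 = S'.1))

/-- Every non-identity automorphism of `G` moves at least `m` vertices.
(This encodes "motion ≥ m", with the convention that asymmetric graphs
have motion exceeding every cardinal.) -/
def MotionAtLeast (G : SimpleGraph V) (m : Cardinal.{u}) : Prop :=
  ∀ φ : G ≃g G, (∃ v, φ v ≠ v) → m ≤ Cardinal.mk {v | φ v ≠ v}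

/-- `G` has motion exactly `m`: every non-identity automorphism moves at least `m`
vertices and some non-identity automorphism moves exactly `m` vertices. -/
def HasMotion (G : SimpleGraph V) (m : Cardinal.{u}) : Prop :=
  MotionAtLeast G m ∧
    ∃ φ : G ≃g G, (∃ v, φ v ≠ v) ∧ Cardinal.mk {v | φ v ≠ v} = m

/-- A graph is rayless if it contains no one-sided infinite path. -/
def Rayless (G : SimpleGraph V) : Prop :=
  ∀ f : ℕ → V, ¬ (Function.Injective f ∧ ∀ n, G.Adj (f n) (f (n + 1)))

/-- `f : ℤ → V` is a double ray (two-sided infinite path) in `G`. -/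
def IsDoubleRayIn (G : SimpleGraph V) (f : ℤ → V) : Prop :=
  Function.Injective f ∧ ∀ n, G.Adj (f n) (f (n + 1))

/-- In the tree `G` rooted at `w`, the set of descendants of `x` (including `x`):
those `v` such that `x` lies on every walk (in particular the unique path) from `w` to `v`. -/
def Desc (G : SimpleGraph V) (w x : V) : Set V :=
  {v | ∀ p : G.Walk w v, x ∈ p.support}

/-- In the tree `G` rooted at `w`, `x` is a child of `y`. -/
def IsChild (G : SimpleGraph V) (w y x : V) : Prop :=
  G.Adj y x ∧ x ∈ Desc G w y

/-- An automorphism of the induced subgraph on `D` fixes the vertex `x`. -/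
def RootedFixes (G : SimpleGraph V) (D : Set V) (x : V)
    (φ : G.induce D ≃g G.induce D) : Prop :=
  ∀ v : D, (v : V) = x → ((φ v : V) = x)

/-- `S` is an asymmetrizing set of the rooted graph `(G.induce D, x)`: the only
automorphism of `G.induce D` fixing `x` and preserving `S` setwise is the identity. -/
def RootedAsymmetrizing (G : SimpleGraph V) (D : Set V) (x : V) (S : Set V) : Prop :=
  ∀ φ : G.induce D ≃g G.induce D, RootedFixes G D x φ →
    (∀ v : D, ((φ v : V) ∈ S ↔ (v : V) ∈ S)) → ∀ v, φ v = v

/-- The number of inequivalent asymmetrizing sets of the rooted graph `(G.induce D, x)`,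
where equivalence is via automorphisms of `G.induce D` fixing the root `x`. -/
noncomputable def aRooted (G : SimpleGraph V) (D : Set V) (x : V) : Cardinal.{u} :=
  Cardinal.mk (Quot (fun S S' : {S : Set V // S ⊆ D ∧ RootedAsymmetrizing G D x S} =>
    ∃ φ : G.induce D ≃g G.induce D, RootedFixes G D x φ ∧
      (fun v : D => ((φ v : V))) '' {v : D | (v : V) ∈ S.1} = S'.1))

/-- The set of vertices of `G` lying on some double ray. -/
def Tstar (G : SimpleGraph V) : Set V :=
  {v | ∃ f : ℤ → V, IsDoubleRayIn G f ∧ ∃ n, f n = v}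

/-- The edges of `G` joining two vertices lying on double rays. -/
def TstarEdges (G : SimpleGraph V) : Set (Sym2 V) :=
  {e | ∃ a b, e = s(a, b) ∧ G.Adj a b ∧ a ∈ Tstar G ∧ b ∈ Tstar G}

/-- `y` lies on all shortest paths from `x` to `w` in `G`. -/
def OnAllShortest (G : SimpleGraph V) (w y x : V) : Prop :=
  ∀ p : G.Walk x w, p.length = G.dist x w → y ∈ p.support

namespace RaylessAux8

variable {G : SimpleGraph V}

/-- path-closed sets -/
def PClosed (G : SimpleGraph V) (S : Set V) : Prop :=
  ∀ ⦃a b : V⦄, a ∈ S → b ∈ S → ∀ p : G.Walk a b, p.IsPath → ∀ x ∈ p.support, x ∈ S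

def Inv (G : SimpleGraph V) (S : Set V) : Prop :=
  ∀ φ : G ≃g G, ∀ v ∈ S, φ v ∈ S

lemma getVert_inj {a b : V} {p : G.Walk a b} (hp : p.IsPath) :
    ∀ i j, i ≤ p.length → j ≤ p.length → p.getVert i = p.getVert j → i = j := by
  induction p with
  | nil => intro i j hi hj _; simp only [Walk.length_nil, Nat.le_zero] at hi hj; omega
  | cons h q ih =>
    rename_i u v w
    rw [Walk.cons_isPath_iff] at hp
    intro i j hi hj hij
    match i, j with
    | 0, 0 => rfl
    | 0, j + 1 =>
      exfalso
      apply hp.2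
      rw [Walk.getVert_zero, Walk.getVert_cons_succ] at hij
      exact Walk.mem_support_iff_exists_getVert.mpr ⟨j, hij.symm, by simpa using hj⟩
    | i + 1, 0 =>
      exfalso
      apply hp.2
      rw [Walk.getVert_zero, Walk.getVert_cons_succ] at hij
      exact Walk.mem_support_iff_exists_getVert.mpr ⟨i, hij, by simpa using hi⟩
    | i + 1, j + 1 =>
      rw [Walk.getVert_cons_succ, Walk.getVert_cons_succ] at hij
      have := ih hp.1 i j (by simpa using hi) (by simpa using hj) hij
      omega

lemma isPath_append {a b c : V} {p : G.Walk a b} {q : G.Walk b c}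
    (hp : p.IsPath) (hq : q.IsPath)
    (h : ∀ x, x ∈ p.support → x ∈ q.support → x = b) :
    (p.append q).IsPath := by
  rw [Walk.isPath_def, Walk.support_append]
  refine List.Nodup.append ((Walk.isPath_def _).1 hp) ((Walk.isPath_def _).1 hq).tail ?_
  intro x hxp hxq
  have hxq' : x ∈ q.support := List.mem_of_mem_tail hxq
  have hx : x = b := h x hxp hxq'
  subst hx
  have : q.support.Nodup := (Walk.isPath_def _).1 hq
  have hcons : q.support = x :: q.support.tail := by
    cases q <;> simp [Walk.support_cons]
  rw [hcons] at this
  exact (List.nodup_cons.mp this).1 hxq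

lemma false_of_growing (hray : Rayless G) (v0 : V) (x : ℕ → V)
    (W : ∀ n, G.Walk v0 (x n)) (hp : ∀ n, (W n).IsPath)
    (hlen : ∀ n, (W n).length < (W (n + 1)).length)
    (hpref : ∀ n k, k ≤ (W n).length → (W (n + 1)).getVert k = (W n).getVert k) : False := by
  have hlow : ∀ n, n ≤ (W n).length := by
    intro n
    induction n with
    | zero => exact Nat.zero_le _
    | succ n ih =>
      have := hlen n
      omega
  set f : ℕ → V := fun n => (W n).getVert n with hf
  have hstable : ∀ n m, n ≤ m → (W m).getVert n = f n := by
    intro n m h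
    induction m with
    | zero =>
      rw [Nat.le_zero] at h
      subst h
      rfl
    | succ m ih =>
      rcases Nat.lt_or_ge n (m + 1) with h' | h'
      · rw [hpref m n (le_trans (by omega) (hlow m))]
        exact ih (by omega)
      · have h2 : n = m + 1 := by omega
        subst h2
        rfl
  apply hray f
  constructor
  · intro i j hij
    rcases Nat.le_total i j with h | h
    · have h1 : (W j).getVert i = f i := hstable i j h
      have h2 : (W j).getVert j = f j := rfl
      exact getVert_inj (hp j) i j (le_trans h (hlow j)) (hlow j) (by rw [h1, h2, hij])
    · have h1 : (W i).getVert j = f j := hstable j i h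
      have h2 : (W i).getVert i = f i := rfl
      exact (getVert_inj (hp i) j i (le_trans h (hlow i)) (hlow i) (by rw [h1, h2, hij])).symm
  · intro n
    have h1 : (W (n + 1)).getVert n = f n := hstable n (n + 1) (by omega)
    have h2 : (W (n + 1)).getVert (n + 1) = f (n + 1) := rfl
    rw [← h1, ← h2]
    exact Walk.adj_getVert_succ _ (lt_of_lt_of_le (Nat.lt_succ_self n) (hlow (n + 1)))

lemma exists_segment {S' : Set V} : ∀ {a b : V} (p : G.Walk a b), p.IsPath →
    a ∉ S' → b ∈ S' →
    ∃ x', x' ∈ S' ∧ ∃ q : G.Walk a x', q.IsPath ∧ 1 ≤ q.length ∧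
      (∀ y ∈ q.support, y ∈ p.support) ∧ (∀ y ∈ q.support, y ∈ S' → y = x') := by
  intro a b p
  induction p with
  | nil => intro _ ha hb; exact absurd hb ha
  | cons h p' ih =>
    rename_i u m w
    intro hp ha hb
    rw [Walk.cons_isPath_iff] at hp
    by_cases hm : m ∈ S'
    · have hum : u ≠ m := fun hh => ha (hh ▸ hm)
      refine ⟨m, hm, Walk.cons h Walk.nil, ?_, by simp, ?_, ?_⟩
      · simp [Walk.isPath_def, hum]
      · intro y hy
        simp only [Walk.support_cons, Walk.support_nil, List.mem_cons,
          List.not_mem_nil, or_false] at hy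
        rcases hy with rfl | hy
        · exact Walk.start_mem_support _
        · subst hy
          rw [Walk.support_cons]
          exact List.mem_cons_of_mem _ (Walk.start_mem_support _)
      · intro y hy hyS
        simp only [Walk.support_cons, Walk.support_nil, List.mem_cons,
          List.not_mem_nil, or_false] at hy
        rcases hy with rfl | hy
        · exact absurd hyS ha
        · exact hy
    · obtain ⟨x', hx', q', hq', hlq', hsub', hlast'⟩ := ih hp.1 hm hb
      have hanotq : u ∉ q'.support := fun hu => hp.2 (hsub' u hu)
      refine ⟨x', hx', Walk.cons h q', hq'.cons hanotq, by simp, ?_, ?_⟩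
      · intro y hy
        rw [Walk.support_cons] at hy ⊢
        rcases List.mem_cons.mp hy with rfl | hy
        · exact List.mem_cons_self
        · exact List.mem_cons_of_mem _ (hsub' y hy)
      · intro y hy hyS
        rw [Walk.support_cons] at hy
        rcases List.mem_cons.mp hy with rfl | hy
        · exact absurd hyS ha
        · exact hlast' y hy hyS

structure GrowState (G : SimpleGraph V) (c : Set (Set V)) (v0 : V) where
  S : Set V
  x : V
  W : G.Walk v0 x
  hS : S ∈ c
  hx : x ∈ S
  hW : W.IsPath
  hinv : ∀ y ∈ W.support, y ∈ S → y = x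

lemma grow_step {c : Set (Set V)} {v0 : V} (hconn : G.Connected)
    (hchain : IsChain (· ⊆ ·) c)
    (hmem : ∀ S ∈ c, S.Nonempty ∧ PClosed G S)
    (hempty : ∀ v, ∃ S ∈ c, v ∉ S)
    (st : GrowState G c v0) :
    ∃ st' : GrowState G c v0, st.W.length < st'.W.length ∧
      ∀ k ≤ st.W.length, st'.W.getVert k = st.W.getVert k := by
  classical
  obtain ⟨S', hS'c, hxS'⟩ := hempty st.x
  have hsub : S' ⊆ st.S := by
    rcases eq_or_ne S' st.S with rfl | hne
    · exact le_rfl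
    · rcases hchain hS'c st.hS hne with h | h
      · exact h
      · exact absurd (h st.hx) hxS'
  obtain ⟨u, huS'⟩ := (hmem S' hS'c).1
  obtain ⟨p0⟩ := hconn.preconnected st.x u
  set p : G.Walk st.x u := p0.bypass with hpdef
  have hppath : p.IsPath := Walk.bypass_isPath p0
  have hpS : ∀ y ∈ p.support, y ∈ st.S :=
    fun y hy => (hmem st.S st.hS).2 st.hx (hsub huS') p hppath y hy
  obtain ⟨x', hx'S', q, hqpath, hqlen, hqsub, hqlast⟩ :=
    exists_segment p hppath hxS' huS'
  have hqS : ∀ y ∈ q.support, y ∈ st.S := fun y hy => hpS y (hqsub y hy)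
  have hdisj : ∀ y, y ∈ st.W.support → y ∈ q.support → y = st.x :=
    fun y hyW hyq => st.hinv y hyW (hqS y hyq)
  refine ⟨⟨S', x', st.W.append q, hS'c, hx'S',
    isPath_append st.hW hqpath hdisj, ?_⟩, ?_, ?_⟩
  · intro y hy hyS'
    rcases (Walk.mem_support_append_iff _ _).mp hy with hyW | hyq
    · exact absurd hyS' ((st.hinv y hyW (hsub hyS')) ▸ hxS')
    · exact hqlast y hyq hyS'
  · simp only [Walk.length_append]
    omega
  · intro k hk
    rw [Walk.getVert_append]
    rcases Nat.lt_or_ge k st.W.length with h | h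
    · simp [h]
    · have hkeq : k = st.W.length := le_antisymm hk h
      subst hkeq
      simp [Walk.getVert_length, Walk.getVert_zero]

lemma chain_sInter_nonempty (hconn : G.Connected) (hray : Rayless G)
    {c : Set (Set V)} (hchain : IsChain (· ⊆ ·) c) (hcne : c.Nonempty)
    (hmem : ∀ S ∈ c, S.Nonempty ∧ PClosed G S) :
    (⋂₀ c).Nonempty := by
  by_contra hne
  have hempty : ∀ v, ∃ S ∈ c, v ∉ S := by
    intro v
    by_contra hv
    push_neg at hv
    exact hne ⟨v, fun S hS => hv S hS⟩
  obtain ⟨S0, hS0⟩ := hcne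
  obtain ⟨x0, hx0⟩ := (hmem S0 hS0).1
  have st0 : GrowState G c x0 :=
    ⟨S0, x0, Walk.nil, hS0, hx0, Walk.IsPath.nil, by
      intro y hy _
      simpa [Walk.support_nil] using hy⟩
  choose next hlen hpref using grow_step hconn hchain hmem hempty
  set seq : ℕ → GrowState G c x0 := fun n => Nat.rec st0 (fun _ s => next s) n with hseq
  have hstep : ∀ n, seq (n + 1) = next (seq n) := fun n => rfl
  exact false_of_growing hray x0 (fun n => (seq n).x) (fun n => (seq n).W)
    (fun n => (seq n).hW)
    (fun n => hlen (seq n))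
    (fun n k hk => hpref (seq n) k hk)

lemma neighbor_unique_in_path (hT : G.IsTree) {a b u : V} {W : G.Walk a b}
    (hW : W.IsPath) (hu : u ∈ W.support) (hadj : G.Adj u b) :
    u = W.getVert (W.length - 1) := by
  classical
  have hd : (W.dropUntil u hu).IsPath := hW.dropUntil hu
  have he : (Walk.cons hadj Walk.nil : G.Walk u b).IsPath := by
    simp [Walk.isPath_def, hadj.ne]
  have huniq := hT.existsUnique_path u b
  have heq : W.dropUntil u hu = Walk.cons hadj Walk.nil :=
    huniq.unique hd he
  have hts := Walk.take_spec W hu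
  have hlen : (W.takeUntil u hu).length + 1 = W.length := by
    have h := congrArg Walk.length hts
    rw [Walk.length_append, heq] at h
    simpa using h
  have hgv : W.getVert (W.takeUntil u hu).length = u := by
    have hgv0 : ((W.takeUntil u hu).append (W.dropUntil u hu)).getVert
        (W.takeUntil u hu).length = u := by
      rw [Walk.getVert_append]
      simp
    rwa [hts] at hgv0
  have h2 : W.length - 1 = (W.takeUntil u hu).length := by omega
  rw [h2]
  exact hgv.symm

structure PState (G : SimpleGraph V) (M : Set V) (v0 : V) where
  x : V
  W : G.Walk v0 x
  hx : x ∈ M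
  hW : W.IsPath
  hsub : ∀ y ∈ W.support, y ∈ M

lemma greedy_step (hT : G.IsTree) {M : Set V} (hPC : PClosed G M)
    (hnl : ∀ v ∈ M, ¬ ∃! u, u ∈ M ∧ G.Adj v u)
    {u0 u1 : V} (hu0 : u0 ∈ M) (hu1 : u1 ∈ M) (hne01 : u0 ≠ u1)
    {v0 : V} (st : PState G M v0) :
    ∃ st' : PState G M v0, st.W.length < st'.W.length ∧
      ∀ k ≤ st.W.length, st'.W.getVert k = st.W.getVert k := by
  classical
  obtain ⟨t, htM, htx⟩ : ∃ t, t ∈ M ∧ t ≠ st.x := by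
    by_cases h : st.x = u0
    · exact ⟨u1, hu1, fun hh => hne01 (hh.trans h).symm⟩
    · exact ⟨u0, hu0, fun hh => h hh.symm⟩
  obtain ⟨p0⟩ := hT.isConnected.preconnected st.x t
  set p : G.Walk st.x t := p0.bypass with hpdef
  have hppath : p.IsPath := Walk.bypass_isPath p0
  have hlen0 : p.length ≠ 0 := fun h => htx (Walk.eq_of_length_eq_zero h).symm
  set v1 : V := p.getVert 1 with hv1
  have hadj1 : G.Adj st.x v1 := by
    have := Walk.adj_getVert_succ p (by omega : 0 < p.length)
    rwa [Walk.getVert_zero] at this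
  have hv1M : v1 ∈ M := by
    refine hPC st.hx htM p hppath v1 ?_
    exact Walk.mem_support_iff_exists_getVert.mpr ⟨1, rfl, by omega⟩
  obtain ⟨v2, hv2, hv2ne⟩ : ∃ v2, (v2 ∈ M ∧ G.Adj st.x v2) ∧ v2 ≠ v1 := by
    by_contra hc
    push_neg at hc
    exact hnl st.x st.hx ⟨v1, ⟨hv1M, hadj1⟩, fun z hz => hc z hz⟩
  have hkey : ∃ z, z ∈ M ∧ G.Adj st.x z ∧ z ∉ st.W.support := by
    by_cases h1 : v1 ∈ st.W.support
    · by_cases h2 : v2 ∈ st.W.support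
      · exfalso
        have e1 := neighbor_unique_in_path hT st.hW h1 hadj1.symm
        have e2 := neighbor_unique_in_path hT st.hW h2 hv2.2.symm
        exact hv2ne (e2.trans e1.symm)
      · exact ⟨v2, hv2.1, hv2.2, h2⟩
    · exact ⟨v1, hv1M, hadj1, h1⟩
  obtain ⟨z, hzM, hzadj, hznot⟩ := hkey
  have hepath : (Walk.cons hzadj Walk.nil : G.Walk st.x z).IsPath := by
    simp [Walk.isPath_def, hzadj.ne]
  have hdisj : ∀ y, y ∈ st.W.support →
      y ∈ (Walk.cons hzadj Walk.nil : G.Walk st.x z).support → y = st.x := by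
    intro y hyW hye
    simp only [Walk.support_cons, Walk.support_nil, List.mem_cons,
      List.not_mem_nil, or_false] at hye
    rcases hye with rfl | rfl
    · rfl
    · exact absurd hyW hznot
  refine ⟨⟨z, st.W.append (Walk.cons hzadj Walk.nil), hzM,
    isPath_append st.hW hepath hdisj, ?_⟩, ?_, ?_⟩
  · intro y hy
    rcases (Walk.mem_support_append_iff _ _).mp hy with hyW | hye
    · exact st.hsub y hyW
    · simp only [Walk.support_cons, Walk.support_nil, List.mem_cons,
        List.not_mem_nil, or_false] at hye
      rcases hye with rfl | rfl
      · exact st.hx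
      · exact hzM
  · simp only [Walk.length_append, Walk.length_cons, Walk.length_nil]
    omega
  · intro k hk
    rw [Walk.getVert_append]
    rcases Nat.lt_or_ge k st.W.length with h | h
    · simp [h]
    · have hkeq : k = st.W.length := le_antisymm hk h
      subst hkeq
      simp [Walk.getVert_length, Walk.getVert_zero]

lemma no_leafless_pair (hT : G.IsTree) (hray : Rayless G) {M : Set V}
    (hPC : PClosed G M)
    (hnl : ∀ v ∈ M, ¬ ∃! u, u ∈ M ∧ G.Adj v u)
    {u0 u1 : V} (hu0 : u0 ∈ M) (hu1 : u1 ∈ M) (hne01 : u0 ≠ u1) : False := by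
  classical
  have st0 : PState G M u0 :=
    ⟨u0, Walk.nil, hu0, Walk.IsPath.nil, by
      intro y hy
      simp only [Walk.support_nil, List.mem_cons, List.not_mem_nil, or_false] at hy
      subst hy
      exact hu0⟩
  choose next hlen hpref using greedy_step hT hPC hnl hu0 hu1 hne01 (v0 := u0)
  set seq : ℕ → PState G M u0 := fun n => Nat.rec st0 (fun _ s => next s) n with hseq
  exact false_of_growing hray u0 (fun n => (seq n).x) (fun n => (seq n).W)
    (fun n => (seq n).hW)
    (fun n => hlen (seq n))
    (fun n k hk => hpref (seq n) k hk)

end RaylessAux8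

open RaylessAux8 in
/-- Every rayless tree contains a finite nonempty subtree invariant under all
automorphisms; consequently it has a vertex fixed by all automorphisms, or an edge fixed
setwise by all automorphisms. -/
theorem rayless_tree_finite_invariant_subtree (G : SimpleGraph V) (hT : G.IsTree)
    (hray : Rayless G) :
    (∃ F : Set V, F.Finite ∧ F.Nonempty ∧ (G.induce F).Connected ∧
        ∀ φ : G ≃g G, ∀ v ∈ F, φ v ∈ F) ∧
      ((∃ v, ∀ φ : G ≃g G, φ v = v) ∨
        ∃ u v, G.Adj u v ∧ ∀ φ : G ≃g G, ({φ u, φ v} : Set V) = {u, v}) := by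
  classical
  have hconn := hT.isConnected
  obtain ⟨v⟩ := hconn.nonempty
  set Fam : Set (Set V) := {S | S.Nonempty ∧ Inv G S ∧ PClosed G S} with hFam
  have huniv : Set.univ ∈ Fam :=
    ⟨⟨v, trivial⟩, fun _ _ _ => trivial, fun _ _ _ _ _ _ _ _ => trivial⟩
  have hZ : ∀ c ⊆ Fam, IsChain (· ⊆ ·) c → c.Nonempty →
      ∃ lb ∈ Fam, ∀ s ∈ c, lb ⊆ s := by
    intro c hsub hchain hcne
    refine ⟨⋂₀ c, ⟨?_, ?_, ?_⟩, fun s hs => Set.sInter_subset_of_mem hs⟩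
    · exact chain_sInter_nonempty hconn hray hchain hcne
        (fun S hS => ⟨(hsub hS).1, (hsub hS).2.2⟩)
    · intro φ w hw
      rw [Set.mem_sInter] at hw ⊢
      exact fun S hS => (hsub hS).2.1 φ w (hw S hS)
    · intro a b ha hb p hp x hx
      rw [Set.mem_sInter] at ha hb ⊢
      exact fun S hS => (hsub hS).2.2 (ha S hS) (hb S hS) p hp x hx
  obtain ⟨M, -, hMmin⟩ := zorn_superset_nonempty Fam hZ Set.univ huniv
  obtain ⟨hMne, hMinv, hMpc⟩ := hMmin.prop
  -- the pruned set
  set P : Set V := {w | w ∈ M ∧ ¬ ∃! u, u ∈ M ∧ G.Adj w u} with hPdef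
  have hPsub : P ⊆ M := fun w hw => hw.1
  have hPinv : Inv G P := by
    intro φ w hw
    obtain ⟨hwM, hwnl⟩ := hw
    refine ⟨hMinv φ w hwM, ?_⟩
    rintro ⟨z, ⟨hzM, hzadj⟩, hzuniq⟩
    apply hwnl
    refine ⟨φ.symm z, ⟨hMinv φ.symm z hzM, ?_⟩, ?_⟩
    · have h2 : G.Adj (φ w) (φ (φ.symm z)) := by
        rw [φ.apply_symm_apply]
        exact hzadj
      exact φ.map_adj_iff.mp h2
    · intro y hy
      have h3 : φ y = z := hzuniq (φ y) ⟨hMinv φ y hy.1, φ.map_adj_iff.mpr hy.2⟩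
      rw [← h3, φ.symm_apply_apply]
  have hPpc : PClosed G P := by
    intro a b ha hb p hp x hx
    have hpM : ∀ y ∈ p.support, y ∈ M := fun y hy => hMpc ha.1 hb.1 p hp y hy
    obtain ⟨i, hgi, hil⟩ := Walk.mem_support_iff_exists_getVert.mp hx
    by_cases hia : i = 0
    · subst hia
      rw [Walk.getVert_zero] at hgi
      exact hgi ▸ ha
    by_cases hib : i = p.length
    · subst hib
      rw [Walk.getVert_length] at hgi
      exact hgi ▸ hb
    have hil' : i < p.length := lt_of_le_of_ne hil hib
    refine ⟨hpM x hx, ?_⟩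
    rintro ⟨z, _, hzuniq⟩
    have hprev : G.Adj x (p.getVert (i - 1)) := by
      have h4 := Walk.adj_getVert_succ p (show i - 1 < p.length by omega)
      have h5 : i - 1 + 1 = i := by omega
      rw [h5, hgi] at h4
      exact h4.symm
    have hnext : G.Adj x (p.getVert (i + 1)) := by
      have h4 := Walk.adj_getVert_succ p hil'
      rwa [hgi] at h4
    have hmem1 : p.getVert (i - 1) ∈ M :=
      hpM _ (Walk.mem_support_iff_exists_getVert.mpr ⟨i - 1, rfl, by omega⟩)
    have hmem2 : p.getVert (i + 1) ∈ M :=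
      hpM _ (Walk.mem_support_iff_exists_getVert.mpr ⟨i + 1, rfl, by omega⟩)
    have e1 : p.getVert (i - 1) = z := hzuniq _ ⟨hmem1, hprev⟩
    have e2 : p.getVert (i + 1) = z := hzuniq _ ⟨hmem2, hnext⟩
    have := getVert_inj hp (i - 1) (i + 1) (by omega) (by omega) (e1.trans e2.symm)
    omega
  by_cases hPne : P.Nonempty
  · -- minimality forces P = M, so M has no leaves, hence M is a singleton
    have hMP : M ⊆ P := hMmin.2 ⟨hPne, hPinv, hPpc⟩ hPsub
    have hnl : ∀ w ∈ M, ¬ ∃! u, u ∈ M ∧ G.Adj w u := fun w hw => (hMP hw).2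
    obtain ⟨m, hm⟩ := hMne
    have hsing : ∀ w ∈ M, w = m := by
      intro w hw
      by_contra hwm
      exact no_leafless_pair hT hray hMpc hnl hw hm hwm
    have hfix : ∀ φ : G ≃g G, φ m = m := fun φ => hsing _ (hMinv φ m hm)
    refine ⟨⟨{m}, Set.finite_singleton m, ⟨m, rfl⟩, ?_, ?_⟩, Or.inl ⟨m, hfix⟩⟩
    · have hne : Nonempty (↥({m} : Set V)) := ⟨⟨m, rfl⟩⟩
      constructor
      intro a b
      have hab : a = b := Subtype.ext (a.2.trans b.2.symm)
      exact hab ▸ Reachable.refl _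
    · intro φ w hw
      rw [Set.mem_singleton_iff] at hw ⊢
      rw [hw]
      exact hfix φ
  · -- every vertex of M is a leaf; M is a single edge
    have hleaf : ∀ w ∈ M, ∃! u, u ∈ M ∧ G.Adj w u := by
      intro w hw
      by_contra h
      exact hPne ⟨w, hw, h⟩
    obtain ⟨u0, hu0⟩ := hMne
    obtain ⟨u1, ⟨hu1M, hadj01⟩, huniq0⟩ := hleaf u0 hu0
    have hw1 : ∀ w, (w ∈ M ∧ G.Adj u1 w) → w = u0 :=
      fun w hw => (hleaf u1 hu1M).unique hw ⟨hu0, hadj01.symm⟩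
    have hMeq : M = {u0, u1} := by
      apply subset_antisymm
      · intro x hx
        by_contra hxne
        simp only [Set.mem_insert_iff, Set.mem_singleton_iff, not_or] at hxne
        obtain ⟨hx0, hx1⟩ := hxne
        obtain ⟨p0⟩ := hconn.preconnected x u0
        set p : G.Walk x u0 := p0.bypass with hpdef
        have hppath : p.IsPath := Walk.bypass_isPath p0
        have hpM : ∀ y ∈ p.support, y ∈ M := fun y hy => hMpc hx hu0 p hppath y hy
        have hL : p.length ≠ 0 := fun h => hx0 (Walk.eq_of_length_eq_zero h)
        have hpen : p.getVert (p.length - 1) = u1 := by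
          apply huniq0
          constructor
          · exact hpM _ (Walk.mem_support_iff_exists_getVert.mpr ⟨p.length - 1, rfl, by omega⟩)
          · have h4 := Walk.adj_getVert_succ p (show p.length - 1 < p.length by omega)
            have h5 : p.length - 1 + 1 = p.length := by omega
            rw [h5, Walk.getVert_length] at h4
            exact h4.symm
        have hL2 : 2 ≤ p.length := by
          by_contra h
          have h1 : p.length = 1 := by omega
          rw [h1] at hpen
          simp only [Nat.sub_self, Walk.getVert_zero] at hpen
          exact hx1 hpen
        have hpen2 : p.getVert (p.length - 2) = u0 := by
          apply hw1
          constructor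
          · exact hpM _ (Walk.mem_support_iff_exists_getVert.mpr ⟨p.length - 2, rfl, by omega⟩)
          · have h4 := Walk.adj_getVert_succ p (show p.length - 2 < p.length by omega)
            have h5 : p.length - 2 + 1 = p.length - 1 := by omega
            rw [h5, hpen] at h4
            exact h4.symm
        have hgl : p.getVert p.length = u0 := Walk.getVert_length p
        have := getVert_inj hppath (p.length - 2) p.length (by omega) le_rfl
          (hpen2.trans hgl.symm)
        omega
      · rintro x (rfl | rfl)
        · exact hu0
        · exact hu1M
    have hpairinv : ∀ φ : G ≃g G, ∀ w ∈ ({u0, u1} : Set V), φ w ∈ ({u0, u1} : Set V) := by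
      intro φ w hw
      rw [← hMeq] at hw ⊢
      exact hMinv φ w hw
    have hedge : ∀ φ : G ≃g G, ({φ u0, φ u1} : Set V) = {u0, u1} := by
      intro φ
      have h0 : φ u0 ∈ ({u0, u1} : Set V) := hpairinv φ u0 (Or.inl rfl)
      have h1 : φ u1 ∈ ({u0, u1} : Set V) := hpairinv φ u1 (Or.inr rfl)
      have hfne : φ u0 ≠ φ u1 := fun h => hadj01.ne (φ.toEquiv.injective h)
      rcases h0 with h0 | h0 <;> rcases h1 with h1 | h1
      · exact absurd (h0.trans h1.symm) hfne
      · rw [h0, h1]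
      · rw [h0, h1]
        exact Set.pair_comm u1 u0
      · exact absurd (h0.trans h1.symm) hfne
    refine ⟨⟨{u0, u1}, (Set.finite_singleton u1).insert u0, ⟨u0, Or.inl rfl⟩, ?_, hpairinv⟩,
      Or.inr ⟨u0, u1, hadj01, hedge⟩⟩
    have hadj' : ∀ (a b : ({u0, u1} : Set V)), (a : V) = u0 → (b : V) = u1 →
        (G.induce ({u0, u1} : Set V)).Adj a b := by
      intro a b ha hb
      show G.Adj (a : V) (b : V)
      rw [ha, hb]
      exact hadj01
    have hne : Nonempty (↥({u0, u1} : Set V)) := ⟨⟨u0, Or.inl rfl⟩⟩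
    constructor
    intro a b
    rcases a.2 with ha | ha <;> rcases b.2 with hb | hb
    · exact (Subtype.ext (ha.trans hb.symm) : a = b) ▸ Reachable.refl _
    · exact (hadj' a b ha hb).reachable
    · exact ((hadj' b a hb ha).reachable).symm
    · exact (Subtype.ext (ha.trans hb.symm) : a = b) ▸ Reachable.refl _
end

section
/- Let m be an infinite cardinal. The tree T obtained by taking strictly more than 2^m pairwise isomorphic asymmetric rooted trees of order m and joining all their roots to one additional common vertex is not asymmetrizable. -/
open SimpleGraph

universe u

variable {V : Type u}

/-- The tree obtained by joining more than `2^m` disjoint copies of an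
asymmetric rooted tree of order `m` (an infinite cardinal) to one common additional
vertex is not asymmetrizable. -/
theorem star_of_branches_not_asymmetrizable {W : Type u} {I : Type u}
    (m : Cardinal.{u}) (hm : Cardinal.aleph0 ≤ m)
    (B : SimpleGraph W) (r : W) (hB : B.IsTree) (hW : Cardinal.mk W = m)
    (hasym : ∀ φ : B ≃g B, φ r = r → ∀ v, φ v = v)
    (hI : 2 ^ m < Cardinal.mk I) :
    ¬ ∃ S : Set (Option (I × W)),
      IsAsymmetrizing (SimpleGraph.fromRel (fun a b =>
        (∃ i x y, a = some (i, x) ∧ b = some (i, y) ∧ B.Adj x y) ∨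
          (∃ i, a = none ∧ b = some (i, r)))) S := by
  haveI : DecidableEq I := Classical.decEq I
  rintro ⟨S, hS⟩
  have htr : ¬ Function.Injective (fun i : I => {w : W | some (i, w) ∈ S}) := by
    intro hinj
    have h1 := Cardinal.mk_le_of_injective hinj
    rw [Cardinal.mk_set, hW] at h1
    exact absurd (lt_of_lt_of_le hI h1) (lt_irrefl _)
  rw [Function.not_injective_iff] at htr
  obtain ⟨i, j, hTij, hij⟩ := htr
  have hTij' : ∀ w : W, some (i, w) ∈ S ↔ some (j, w) ∈ S := by
    intro w
    have := congrArg (fun T : Set W => w ∈ T) hTij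
    simpa using this
  let e : Option (I × W) ≃ Option (I × W) :=
    Equiv.optionCongr ((Equiv.swap i j).prodCongr (Equiv.refl W))
  have he : ∀ (k : I) (w : W), e (some (k, w)) = some (Equiv.swap i j k, w) := by
    intro k w; rfl
  have hen : e none = none := rfl
  let rel : Option (I × W) → Option (I × W) → Prop := fun a b =>
    (∃ i x y, a = some (i, x) ∧ b = some (i, y) ∧ B.Adj x y) ∨
      (∃ i, a = none ∧ b = some (i, r))
  have hrel : ∀ a b, rel a b → rel (e a) (e b) := by
    rintro a b (⟨k, x, y, rfl, rfl, hxy⟩ | ⟨k, rfl, rfl⟩)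
    · exact Or.inl ⟨Equiv.swap i j k, x, y, rfl, rfl, hxy⟩
    · exact Or.inr ⟨Equiv.swap i j k, rfl, rfl⟩
  have hee : ∀ a, e (e a) = a := by
    rintro (_ | ⟨k, w⟩)
    · rfl
    · rw [he, he, Equiv.swap_apply_self]
  have hrel' : ∀ a b, rel (e a) (e b) → rel a b := by
    intro a b h
    have := hrel _ _ h
    rwa [hee, hee] at this
  let φ : (SimpleGraph.fromRel rel) ≃g (SimpleGraph.fromRel rel) :=
    { toEquiv := e
      map_rel_iff' := by
        intro a b
        simp only [SimpleGraph.fromRel_adj]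
        constructor
        · rintro ⟨hne, h⟩
          refine ⟨fun h' => hne (by rw [h']), ?_⟩
          rcases h with h | h
          · exact Or.inl (hrel' _ _ h)
          · exact Or.inr (hrel' _ _ h)
        · rintro ⟨hne, h⟩
          refine ⟨fun h' => hne (e.injective h'), ?_⟩
          rcases h with h | h
          · exact Or.inl (hrel _ _ h)
          · exact Or.inr (hrel _ _ h) }
  have hpres : ∀ v, φ v ∈ S ↔ v ∈ S := by
    rintro (_ | ⟨k, w⟩)
    · exact Iff.rfl
    · show e (some (k, w)) ∈ S ↔ _
      rw [he]
      rcases eq_or_ne k i with rfl | hki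
      · rw [Equiv.swap_apply_left]
        exact (hTij' w).symm
      · rcases eq_or_ne k j with rfl | hkj
        · rw [Equiv.swap_apply_right]
          exact hTij' w
        · rw [Equiv.swap_apply_of_ne_of_ne hki hkj]
  have := hS φ hpres (some (i, r))
  have h2 : e (some (i, r)) = some (i, r) := this
  rw [he, Equiv.swap_apply_left] at h2
  exact hij (Prod.ext_iff.mp (Option.some_injective _ h2)).1.symm
end

section
/- Let α be an infinite cardinal and T a tree in which every vertex has degree exactly α. Then the motion of T equals α. -/
open SimpleGraph

universe u

variable {V : Type u}

namespace RegTreeAux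

variable {V : Type u} {G : SimpleGraph V}

lemma walk_eq (hT : G.IsTree) {u w : V} {p q : G.Walk u w} (hp : p.IsPath) (hq : q.IsPath) :
    p = q := by
  have := hT.IsAcyclic.path_unique ⟨p, hp⟩ ⟨q, hq⟩
  exact congrArg Subtype.val this

lemma length_eq_dist (hT : G.IsTree) {u w : V} {p : G.Walk u w} (hp : p.IsPath) :
    p.length = G.dist u w := by
  obtain ⟨q, hq, hql⟩ := hT.isConnected.exists_path_of_dist u w
  rw [walk_eq hT hp hq]; exact hql

lemma dist_le_of_mem_support {u w x : V} {p : G.Walk u w} (hx : x ∈ p.support) :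
    G.dist u x ≤ p.length := by
  classical
  exact le_trans (SimpleGraph.dist_le (p.takeUntil x hx)) (Walk.length_takeUntil_le p hx)

/-- In a tree, adjacent vertices have different distances from any root. -/
lemma dist_ne_of_adj (hT : G.IsTree) {v x w : V} (hadj : G.Adj x w) :
    G.dist v x ≠ G.dist v w := by
  classical
  intro heq
  have hxw : x ≠ w := hadj.ne
  obtain ⟨p, hp, hpl⟩ := hT.isConnected.exists_path_of_dist v x
  by_cases hw : w ∈ p.support
  · -- then dist v w ≤ takeUntil length, and lengths force w = x
    have h1 : G.dist v w ≤ (p.takeUntil w hw).length := SimpleGraph.dist_le _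
    have h2 : (p.takeUntil w hw).length + (p.dropUntil w hw).length = p.length := by
      rw [← Walk.length_append, Walk.take_spec]
    have h3 : (p.dropUntil w hw).length = 0 := by omega
    exact hxw (Walk.eq_of_length_eq_zero h3).symm
  · -- extend p by the edge to w : path of length dist v x + 1 from w to v
    have hQ : (Walk.cons hadj.symm p.reverse : G.Walk w v).IsPath := by
      refine hp.reverse.cons ?_
      rw [Walk.support_reverse, List.mem_reverse]; exact hw
    obtain ⟨q, hq, hql⟩ := hT.isConnected.exists_path_of_dist w v
    have := walk_eq hT hQ hq
    have hlen := congrArg Walk.length this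
    rw [Walk.length_cons, Walk.length_reverse, hpl, hql, SimpleGraph.dist_comm (u := w) (v := v)] at hlen
    rw [heq] at hlen
    omega

lemma exists_parent (hT : G.IsTree) (v : V) {w : V} (hw : w ≠ v) :
    ∃ u, G.Adj w u ∧ G.dist v u + 1 = G.dist v w := by
  obtain ⟨p, hp, hpl⟩ := hT.isConnected.exists_path_of_dist w v
  have hpos : 0 < G.dist w v := hT.isConnected.pos_dist_of_ne hw
  cases p with
  | nil => simp at hpos
  | cons h q =>
    rename_i u
    refine ⟨u, h, ?_⟩
    have hq : q.IsPath := hp.of_cons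
    have h1 : G.dist u v ≤ q.length := SimpleGraph.dist_le q
    have h2 : q.length + 1 = G.dist w v := by
      simpa [Walk.length_cons] using hpl
    have h3 : G.dist v w ≤ G.dist v u + 1 := by
      have := hT.isConnected.dist_triangle (u := v) (v := u) (w := w)
      have hd1 : G.dist u w ≤ 1 := by
        exact le_of_eq (SimpleGraph.dist_eq_one_iff_adj.mpr h.symm)
      omega
    have hc1 : G.dist v u = G.dist u v := SimpleGraph.dist_comm
    have hc2 : G.dist v w = G.dist w v := SimpleGraph.dist_comm
    omega

lemma parent_unique (hT : G.IsTree) (v : V) {w u₁ u₂ : V}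
    (h₁ : G.Adj w u₁) (hd₁ : G.dist v u₁ + 1 = G.dist v w)
    (h₂ : G.Adj w u₂) (hd₂ : G.dist v u₂ + 1 = G.dist v w) : u₁ = u₂ := by
  obtain ⟨p₁, hp₁, hl₁⟩ := hT.isConnected.exists_path_of_dist v u₁
  obtain ⟨p₂, hp₂, hl₂⟩ := hT.isConnected.exists_path_of_dist v u₂
  have hw₁ : w ∉ p₁.support := by
    intro hmem
    have := dist_le_of_mem_support (G := G) hmem
    omega
  have hw₂ : w ∉ p₂.support := by
    intro hmem
    have := dist_le_of_mem_support (G := G) hmem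
    omega
  have hP₁ : (Walk.cons h₁ p₁.reverse : G.Walk w v).IsPath := by
    refine hp₁.reverse.cons ?_
    rw [Walk.support_reverse, List.mem_reverse]; exact hw₁
  have hP₂ : (Walk.cons h₂ p₂.reverse : G.Walk w v).IsPath := by
    refine hp₂.reverse.cons ?_
    rw [Walk.support_reverse, List.mem_reverse]; exact hw₂
  have := walk_eq hT hP₁ hP₂
  have := congrArg (fun r => r.getVert 1) this
  simpa [Walk.getVert_cons_succ, Walk.getVert_zero] using this

/-- Children of `x` in the tree rooted at `v`. -/
def children (G : SimpleGraph V) (v x : V) : Set V :=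
  {u | G.Adj x u ∧ G.dist v u = G.dist v x + 1}

open Classical in
/-- The parent of `w` in the tree rooted at `v` (junk value `v` at the root). -/
noncomputable def parent (G : SimpleGraph V) (v w : V) : V :=
  if h : ∃ u, G.Adj w u ∧ G.dist v u + 1 = G.dist v w then h.choose else v

lemma parent_spec (hT : G.IsTree) (v : V) {w : V} (hw : w ≠ v) :
    G.Adj w (parent G v w) ∧ G.dist v (parent G v w) + 1 = G.dist v w := by
  have h := exists_parent hT v hw
  classical
  rw [parent, dif_pos h]
  exact h.choose_spec

lemma eq_parent (hT : G.IsTree) (v : V) {w u : V} (h : G.Adj w u)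
    (hd : G.dist v u + 1 = G.dist v w) : u = parent G v w := by
  have hw : w ≠ v := by
    intro hwv; subst hwv; simp [SimpleGraph.dist_self] at hd
  obtain ⟨h1, h2⟩ := parent_spec hT v hw
  exact parent_unique hT v h hd h1 h2

lemma mem_children_parent (hT : G.IsTree) (v : V) {w : V} (hw : w ≠ v) :
    w ∈ children G v (parent G v w) := by
  obtain ⟨h1, h2⟩ := parent_spec hT v hw
  exact ⟨h1.symm, h2.symm ▸ rfl⟩

lemma dist_parent_lt (hT : G.IsTree) (v : V) {w : V} (hw : w ≠ v) :
    G.dist v (parent G v w) < G.dist v w := by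
  have := (parent_spec hT v hw).2
  omega

lemma adj_cases (hT : G.IsTree) (v : V) {x w : V} (h : G.Adj x w) :
    (w ∈ children G v x ∧ x = parent G v w) ∨ (x ∈ children G v w ∧ w = parent G v x) := by
  have hne := dist_ne_of_adj hT (v := v) h
  have t1 : G.dist v w ≤ G.dist v x + 1 := by
    have := hT.isConnected.dist_triangle (u := v) (v := x) (w := w)
    have : G.dist x w = 1 := SimpleGraph.dist_eq_one_iff_adj.mpr h
    omega
  have t2 : G.dist v x ≤ G.dist v w + 1 := by
    have := hT.isConnected.dist_triangle (u := v) (v := w) (w := x)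
    have : G.dist w x = 1 := SimpleGraph.dist_eq_one_iff_adj.mpr h.symm
    omega
  rcases Nat.lt_or_ge (G.dist v x) (G.dist v w) with hlt | hge
  · left
    have hd : G.dist v w = G.dist v x + 1 := by omega
    exact ⟨⟨h, hd⟩, eq_parent hT v h.symm hd.symm⟩
  · right
    have hd : G.dist v x = G.dist v w + 1 := by omega
    exact ⟨⟨h.symm, hd⟩, eq_parent hT v h hd.symm⟩

lemma children_root (hT : G.IsTree) (v : V) :
    children G v v = G.neighborSet v := by
  ext u
  simp only [children, Set.mem_setOf_eq, mem_neighborSet, SimpleGraph.dist_self]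
  exact ⟨fun h => h.1, fun h => ⟨h, SimpleGraph.dist_eq_one_iff_adj.mpr h⟩⟩

lemma children_of_ne (hT : G.IsTree) (v : V) {x : V} (hx : x ≠ v) :
    children G v x = G.neighborSet x \ {parent G v x} := by
  ext u
  constructor
  · rintro ⟨h1, h2⟩
    refine ⟨h1, ?_⟩
    intro hu
    simp only [Set.mem_singleton_iff] at hu
    subst hu
    have := (parent_spec hT v hx).2
    omega
  · rintro ⟨h1, h2⟩
    simp only [Set.mem_singleton_iff] at h2
    rcases adj_cases hT v (h1 : G.Adj x u) with ⟨hc, _⟩ | ⟨_, hp⟩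
    · exact hc
    · exact absurd hp h2

lemma card_children (hT : G.IsTree) (v : V) {α : Cardinal.{u}} (hα : Cardinal.aleph0 ≤ α)
    (hdeg : ∀ x, Cardinal.mk (G.neighborSet x) = α) (x : V) :
    Cardinal.mk (children G v x) = α := by
  rcases eq_or_ne x v with rfl | hx
  · rw [children_root hT]; exact hdeg x
  · rw [children_of_ne hT v hx]
    have hmem : parent G v x ∈ G.neighborSet x := (parent_spec hT v hx).1
    have hsub : {parent G v x} ⊆ G.neighborSet x := Set.singleton_subset_iff.mpr hmem
    have hdiff := Cardinal.mk_diff_add_mk (S := G.neighborSet x) hsub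
    rw [Cardinal.mk_singleton, hdeg x] at hdiff
    have hinf : Cardinal.aleph0 ≤ Cardinal.mk ↥(G.neighborSet x \ {parent G v x}) := by
      by_contra hlt
      push_neg at hlt
      have : Cardinal.mk ↥(G.neighborSet x \ {parent G v x}) + 1 < Cardinal.aleph0 :=
        Cardinal.add_lt_aleph0 hlt Cardinal.one_lt_aleph0
      rw [hdiff] at this
      exact absurd hα (not_le.mpr this)
    rw [← hdiff, Cardinal.add_one_eq hinf]

section Phi

variable (G : SimpleGraph V) (hT : G.IsTree) (v : V)
  (d : ∀ x : V, ↥(children G v x) ≃ ↥(children G v v))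
  (a b : ↥(children G v v))

noncomputable def dd (x : V) : ↥(children G v x) ≃ ↥(children G v v) :=
  (d x).trans (d v).symm

lemma dd_root (u : ↥(children G v v)) : dd G v d v u = u :=
  Equiv.symm_apply_apply _ _

lemma dd_root_symm (u : ↥(children G v v)) : (dd G v d v).symm u = u := by
  rw [Equiv.symm_apply_eq, dd_root]

lemma dd_inj {x x' : V} (hxx : x = x') {w w' : V} (hw : w ∈ children G v x)
    (hw' : w' ∈ children G v x')
    (h : dd G v d x ⟨w, hw⟩ = dd G v d x' ⟨w', hw'⟩) : w = w' := by
  subst hxx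
  exact congrArg Subtype.val ((dd G v d x).injective h)

open Classical in
noncomputable def swFun (u : ↥(children G v v)) : ↥(children G v v) :=
  if u = a then b else if u = b then a else u

lemma swFun_left : swFun G v a b a = b := by
  rw [swFun, if_pos rfl]

lemma swFun_right : swFun G v a b b = a := by
  rw [swFun]
  split_ifs with h1 h2
  · exact h1
  · rfl
  · exact absurd rfl h2

lemma swFun_other {u : ↥(children G v v)} (h1 : u ≠ a) (h2 : u ≠ b) :
    swFun G v a b u = u := by
  rw [swFun, if_neg h1, if_neg h2]

lemma swFun_invol (u : ↥(children G v v)) :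
    swFun G v a b (swFun G v a b u) = u := by
  rcases eq_or_ne u a with h | h1
  · rw [h, swFun_left, swFun_right]
  · rcases eq_or_ne u b with h | h2
    · rw [h, swFun_right, swFun_left]
    · rw [swFun_other G v a b h1 h2, swFun_other G v a b h1 h2]

noncomputable def sw : ↥(children G v v) ≃ ↥(children G v v) :=
  ⟨swFun G v a b, swFun G v a b, swFun_invol G v a b, swFun_invol G v a b⟩

lemma sw_apply_left : sw G v a b a = b := by
  show swFun G v a b a = b
  rw [swFun, if_pos rfl]

lemma sw_invol (u : ↥(children G v v)) : sw G v a b (sw G v a b u) = u :=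
  swFun_invol G v a b u

open Classical in
noncomputable def Sw (x y : V) : ↥(children G v v) ≃ ↥(children G v v) :=
  if x = v ∨ y = v then sw G v a b else Equiv.refl _

lemma Sw_comm (x y : V) : Sw G v a b y x = Sw G v a b x y := by
  classical
  by_cases h : x = v ∨ y = v
  · rw [Sw, Sw, if_pos h, if_pos h.symm]
  · rw [Sw, Sw, if_neg h, if_neg (fun hc => h hc.symm)]

lemma Sw_invol (x y : V) (u : ↥(children G v v)) :
    Sw G v a b x y (Sw G v a b x y u) = u := by
  rw [Sw]
  split_ifs
  · exact sw_invol G v a b u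
  · rfl

lemma Sw_root : Sw G v a b v v = sw G v a b := by
  rw [Sw, if_pos (Or.inl rfl)]

noncomputable def EE (x y : V) : ↥(children G v x) ≃ ↥(children G v y) :=
  (dd G v d x).trans ((Sw G v a b x y).trans (dd G v d y).symm)

lemma EE_invol (x y : V) (u : ↥(children G v x)) :
    EE G v d a b y x (EE G v d a b x y u) = u := by
  simp only [EE, Equiv.trans_apply, Equiv.apply_symm_apply]
  rw [Sw_comm, Sw_invol, Equiv.symm_apply_apply]

open Classical in
noncomputable def phi (w : V) : V :=
  if h : w = v then v
  else ↑(EE G v d a b (parent G v w) (phi (parent G v w))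
    ⟨w, mem_children_parent hT v h⟩)
termination_by G.dist v w
decreasing_by exact dist_parent_lt hT v h

lemma phi_root : phi G hT v d a b v = v := by
  rw [phi]; simp

lemma phi_of_ne {w : V} (h : w ≠ v) :
    phi G hT v d a b w =
      ↑(EE G v d a b (parent G v w) (phi G hT v d a b (parent G v w))
        ⟨w, mem_children_parent hT v h⟩) := by
  rw [phi]
  rw [dif_neg h]

lemma phi_child {x w : V} (hx : w ∈ children G v x) :
    phi G hT v d a b w = ↑(EE G v d a b x (phi G hT v d a b x) ⟨w, hx⟩) := by
  have hw : w ≠ v := by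
    intro h
    subst h
    have := hx.2
    simp [SimpleGraph.dist_self] at this
  have hxp : x = parent G v w := eq_parent hT v hx.1.symm (by have := hx.2; omega)
  subst hxp
  exact phi_of_ne G hT v d a b hw

lemma phi_spec : ∀ n : ℕ, ∀ w : V, G.dist v w = n →
    G.dist v (phi G hT v d a b w) = n ∧
      phi G hT v d a b (phi G hT v d a b w) = w := by
  intro n
  induction n using Nat.strong_induction_on with
  | _ n IH =>
    intro w hw
    rcases eq_or_ne w v with h | hne
    · rw [h, phi_root]
      exact ⟨h ▸ hw, phi_root G hT v d a b⟩
    · have hpos : 0 < n := by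
        rcases Nat.eq_zero_or_pos n with h0 | h
        · exfalso
          rw [h0] at hw
          exact hne ((hT.isConnected.dist_eq_zero_iff).mp hw).symm
        · exact h
      have hps := parent_spec hT v hne
      have hmemw : w ∈ children G v (parent G v w) := mem_children_parent hT v hne
      have hdx : G.dist v (parent G v w) = n - 1 := by omega
      obtain ⟨ihd, ihi⟩ := IH (n - 1) (by omega) (parent G v w) hdx
      have hkey : phi G hT v d a b w =
          ↑(EE G v d a b (parent G v w) (phi G hT v d a b (parent G v w)) ⟨w, hmemw⟩) :=
        phi_child G hT v d a b hmemw
      have hmemphi : phi G hT v d a b w ∈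
          children G v (phi G hT v d a b (parent G v w)) := by
        rw [hkey]
        exact (EE G v d a b (parent G v w) (phi G hT v d a b (parent G v w)) ⟨w, hmemw⟩).2
      have hdphi : G.dist v (phi G hT v d a b w) = n := by
        have := hmemphi.2
        omega
      refine ⟨hdphi, ?_⟩
      rw [phi_child G hT v d a b hmemphi, ihi]
      have hsub : (⟨phi G hT v d a b w, hmemphi⟩ :
          ↥(children G v (phi G hT v d a b (parent G v w)))) =
          EE G v d a b (parent G v w) (phi G hT v d a b (parent G v w)) ⟨w, hmemw⟩ :=
        Subtype.ext hkey
      rw [hsub, EE_invol]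

lemma phi_adj {x w : V} (h : G.Adj x w) :
    G.Adj (phi G hT v d a b x) (phi G hT v d a b w) := by
  rcases adj_cases hT v h with ⟨hc, _⟩ | ⟨hc, _⟩
  · have hm : phi G hT v d a b w ∈ children G v (phi G hT v d a b x) := by
      rw [phi_child G hT v d a b hc]
      exact (EE G v d a b x (phi G hT v d a b x) ⟨w, hc⟩).2
    exact hm.1
  · have hm : phi G hT v d a b x ∈ children G v (phi G hT v d a b w) := by
      rw [phi_child G hT v d a b hc]
      exact (EE G v d a b w (phi G hT v d a b w) ⟨x, hc⟩).2
    exact hm.1.symm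

lemma phi_moves : phi G hT v d a b ↑a = ↑b := by
  have hc : (a : V) ∈ children G v v := a.2
  have h1 : (⟨(a : V), hc⟩ : ↥(children G v v)) = a := Subtype.ext rfl
  rw [phi_child G hT v d a b hc, phi_root]
  show ↑((dd G v d v).symm (Sw G v a b v v (dd G v d v ⟨↑a, hc⟩))) = (b : V)
  rw [h1, dd_root, Sw_root, sw_apply_left, dd_root_symm]

noncomputable def Phi : G ≃g G :=
  ⟨⟨phi G hT v d a b, phi G hT v d a b,
    fun w => (phi_spec G hT v d a b (G.dist v w) w rfl).2,
    fun w => (phi_spec G hT v d a b (G.dist v w) w rfl).2⟩, by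
    intro x w
    simp only [Equiv.coe_fn_mk]
    constructor
    · intro h
      have h2 := phi_adj G hT v d a b h
      rwa [(phi_spec G hT v d a b (G.dist v x) x rfl).2,
        (phi_spec G hT v d a b (G.dist v w) w rfl).2] at h2
    · exact phi_adj G hT v d a b⟩

open Classical in
noncomputable def code (w : V) : List ↥(children G v v) :=
  if h : w = v then []
  else code (parent G v w) ++
    [dd G v d (parent G v w) ⟨w, mem_children_parent hT v h⟩]
termination_by G.dist v w
decreasing_by exact dist_parent_lt hT v h

lemma code_root : code G hT v d v = [] := by
  rw [code, dif_pos rfl]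

lemma code_of_ne {w : V} (h : w ≠ v) :
    code G hT v d w = code G hT v d (parent G v w) ++
      [dd G v d (parent G v w) ⟨w, mem_children_parent hT v h⟩] := by
  rw [code, dif_neg h]

lemma code_length : ∀ n : ℕ, ∀ w : V, G.dist v w = n →
    (code G hT v d w).length = n := by
  intro n
  induction n using Nat.strong_induction_on with
  | _ n IH =>
    intro w hw
    rcases eq_or_ne w v with h | hne
    · have h0 : n = 0 := by rw [← hw, h, SimpleGraph.dist_self]
      rw [h, code_root, h0]
      rfl
    · have hps := parent_spec hT v hne
      have hpos : 0 < n := by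
        rcases Nat.eq_zero_or_pos n with h0 | h
        · exfalso
          rw [h0] at hw
          exact hne ((hT.isConnected.dist_eq_zero_iff).mp hw).symm
        · exact h
      have hdx : G.dist v (parent G v w) = n - 1 := by omega
      rw [code_of_ne G hT v d hne, List.length_append, IH (n - 1) (by omega) _ hdx]
      simp
      omega

lemma code_inj : ∀ n : ℕ, ∀ w w' : V, G.dist v w = n → G.dist v w' = n →
    code G hT v d w = code G hT v d w' → w = w' := by
  intro n
  induction n using Nat.strong_induction_on with
  | _ n IH =>
    intro w w' hw hw' hcode
    rcases eq_or_ne w v with h | hne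
    · rcases eq_or_ne w' v with h' | hne'
      · rw [h, h']
      · exfalso
        rw [h, code_root, code_of_ne G hT v d hne'] at hcode
        exact List.append_ne_nil_of_right_ne_nil _ (by simp) hcode.symm
    · rcases eq_or_ne w' v with h' | hne'
      · exfalso
        rw [h', code_root, code_of_ne G hT v d hne] at hcode
        exact List.append_ne_nil_of_right_ne_nil _ (by simp) hcode
      · have hps := parent_spec hT v hne
        have hps' := parent_spec hT v hne'
        have hdx : G.dist v (parent G v w) = n - 1 := by omega
        have hdx' : G.dist v (parent G v w') = n - 1 := by omega
        rw [code_of_ne G hT v d hne, code_of_ne G hT v d hne'] at hcode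
        have hlen : (code G hT v d (parent G v w)).length =
            (code G hT v d (parent G v w')).length := by
          rw [code_length G hT v d (n - 1) _ hdx, code_length G hT v d (n - 1) _ hdx']
        obtain ⟨hc1, hc2⟩ := List.append_inj hcode hlen
        have hpp : parent G v w = parent G v w' :=
          IH (n - 1) (by omega) _ _ hdx hdx' hc1
        have hi := List.head_eq_of_cons_eq hc2
        exact dd_inj G v d hpp (mem_children_parent hT v hne)
          (mem_children_parent hT v hne') hi

end Phi

section CardV

variable (G : SimpleGraph V) (hT : G.IsTree) (v : V)
  (d : ∀ x : V, ↥(children G v x) ≃ ↥(children G v v))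

include hT d in
lemma card_V_le (hinf : Infinite ↥(children G v v)) :
    Cardinal.mk V ≤ Cardinal.mk ↥(children G v v) := by
  haveI := hinf
  have hinj : Function.Injective (code G hT v d) := by
    intro w w' h
    have hl : G.dist v w' = G.dist v w := by
      have h1 := code_length G hT v d (G.dist v w) w rfl
      have h2 := code_length G hT v d (G.dist v w') w' rfl
      rw [h] at h1
      omega
    exact code_inj G hT v d (G.dist v w) w w' rfl hl h
  calc Cardinal.mk V ≤ Cardinal.mk (List ↥(children G v v)) :=
        Cardinal.mk_le_of_injective hinj
    _ = Cardinal.mk ↥(children G v v) := Cardinal.mk_list_eq_mk _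

end CardV


section Motion

variable {G : SimpleGraph V}

lemma motion_lower (hT : G.IsTree) {α : Cardinal.{u}}
    (hα : Cardinal.aleph0 ≤ α)
    (hdeg : ∀ x, Cardinal.mk (G.neighborSet x) = α) :
    ∀ φ : G ≃g G, (∃ x, φ x ≠ x) → α ≤ Cardinal.mk {x | φ x ≠ x} := by
  rintro φ ⟨v₀, hv₀⟩
  classical
  set M : Set V := {u | u ∈ G.neighborSet v₀ ∧ φ u ≠ u} with hM
  set F : Set V := {u | u ∈ G.neighborSet v₀ ∧ φ u = u} with hF
  have hadj' : ∀ u : V, G.Adj v₀ u → φ u = u → G.Adj u (φ v₀) := by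
    intro u h1 hf
    have h := φ.map_rel_iff.mpr h1
    rw [hf] at h
    exact h.symm
  have hP : ∀ (u : V) (h1 : G.Adj v₀ u) (h2 : G.Adj u (φ v₀)),
      (Walk.cons h1 (Walk.cons h2 Walk.nil) : G.Walk v₀ (φ v₀)).IsPath := by
    intro u h1 h2
    have n1 : v₀ ≠ u := h1.ne
    have n2 : v₀ ≠ φ v₀ := fun h => hv₀ h.symm
    have n3 : u ≠ φ v₀ := h2.ne
    simp [Walk.isPath_def, n1, n2, n3]
  have hFsub : F.Subsingleton := by
    rintro u₁ ⟨hu₁, hf₁⟩ u₂ ⟨hu₂, hf₂⟩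
    have ha1 : G.Adj v₀ u₁ := hu₁
    have ha2 : G.Adj v₀ u₂ := hu₂
    have hb1 := hadj' u₁ ha1 hf₁
    have hb2 := hadj' u₂ ha2 hf₂
    have heq := walk_eq hT (hP u₁ ha1 hb1) (hP u₂ ha2 hb2)
    have := congrArg (fun r => r.getVert 1) heq
    simpa [Walk.getVert_cons_succ, Walk.getVert_zero] using this
  have hFcard : Cardinal.mk F ≤ 1 := hFsub.cardinalMk_le_one
  have hunion : G.neighborSet v₀ = F ∪ M := by
    ext u
    constructor
    · intro hu
      by_cases hf : φ u = u
      · exact Or.inl ⟨hu, hf⟩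
      · exact Or.inr ⟨hu, hf⟩
    · rintro (⟨hu, _⟩ | ⟨hu, _⟩) <;> exact hu
  have hcard : α ≤ 1 + Cardinal.mk M := by
    calc α = Cardinal.mk (G.neighborSet v₀) := (hdeg v₀).symm
      _ = Cardinal.mk ↥(F ∪ M) := by rw [hunion]
      _ ≤ Cardinal.mk F + Cardinal.mk M := Cardinal.mk_union_le F M
      _ ≤ 1 + Cardinal.mk M := add_le_add hFcard le_rfl
  have hMinf : Cardinal.aleph0 ≤ Cardinal.mk M := by
    by_contra hlt
    push_neg at hlt
    have hsmall : (1 : Cardinal) + Cardinal.mk M < Cardinal.aleph0 :=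
      Cardinal.add_lt_aleph0 Cardinal.one_lt_aleph0 hlt
    exact absurd (hα.trans hcard) (not_le.mpr hsmall)
  have h1M : (1 : Cardinal) + Cardinal.mk M = Cardinal.mk M := by
    rw [add_comm]
    exact Cardinal.add_one_eq hMinf
  have hsub : M ⊆ {x | φ x ≠ x} := fun u hu => hu.2
  calc α ≤ 1 + Cardinal.mk M := hcard
    _ = Cardinal.mk M := h1M
    _ ≤ Cardinal.mk {x | φ x ≠ x} := Cardinal.mk_le_mk_of_subset hsub

end Motion

end RegTreeAux

/-- A tree in which every vertex has degree exactly `α` (an infinite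
cardinal) has motion `α`. -/
theorem regular_tree_motion (G : SimpleGraph V) (hT : G.IsTree)
    (α : Cardinal.{u}) (hα : Cardinal.aleph0 ≤ α)
    (hdeg : ∀ v, Cardinal.mk (G.neighborSet v) = α) :
    HasMotion G α := by
  classical
  obtain ⟨v⟩ := hT.isConnected.nonempty
  have hcc : ∀ x, Cardinal.mk ↥(RegTreeAux.children G v x) = α :=
    RegTreeAux.card_children hT v hα hdeg
  have hinf : Infinite ↥(RegTreeAux.children G v v) :=
    Cardinal.infinite_iff.mpr (by rw [hcc v]; exact hα)
  haveI := hinf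
  obtain ⟨a, b, hab⟩ := exists_pair_ne ↥(RegTreeAux.children G v v)
  have hd : ∀ x : V, Nonempty (↥(RegTreeAux.children G v x) ≃ ↥(RegTreeAux.children G v v)) :=
    fun x => Cardinal.eq.mp (by rw [hcc x, hcc v])
  let d : ∀ x : V, ↥(RegTreeAux.children G v x) ≃ ↥(RegTreeAux.children G v v) :=
    fun x => (hd x).some
  have hlower : MotionAtLeast G α := fun φ h => RegTreeAux.motion_lower hT hα hdeg φ h
  have hmove : (RegTreeAux.Phi G hT v d a b) ↑a ≠ ↑a := by
    show RegTreeAux.phi G hT v d a b ↑a ≠ ↑a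
    rw [RegTreeAux.phi_moves]
    exact fun h => hab (Subtype.ext h).symm
  refine ⟨hlower, RegTreeAux.Phi G hT v d a b, ⟨a, hmove⟩, ?_⟩
  apply le_antisymm
  · calc Cardinal.mk {x | (RegTreeAux.Phi G hT v d a b) x ≠ x} ≤ Cardinal.mk V :=
        Cardinal.mk_subtype_le _
      _ ≤ Cardinal.mk ↥(RegTreeAux.children G v v) := RegTreeAux.card_V_le G hT v d hinf
      _ = α := hcc v
  · exact hlower _ ⟨a, hmove⟩
end

section
/- Let T be a tree containing a double ray and let T_* be the subgraph induced by all vertices of T that lie on some double ray. Then T_* is a nonempty subtree of T, every automorphism of T maps T_* to itself, and every component of T − E(T_*) is rayless. -/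
open SimpleGraph

universe u

variable {V : Type u}

variable {G : SimpleGraph V}

lemma exists_walk_fun (G : SimpleGraph V) (r : ℕ → V) (k : ℕ)
    (h : ∀ i < k, G.Adj (r i) (r (i+1))) :
    ∃ p : G.Walk (r 0) (r k), p.support = (List.range (k+1)).map r := by
  induction k with
  | zero => exact ⟨Walk.nil, by simp [List.range_succ]⟩
  | succ k ih =>
    obtain ⟨p, hp⟩ := ih fun i hi => h i (by omega)
    exact ⟨p.concat (h k (by omega)), by
      rw [Walk.support_concat, hp]; simp [List.range_succ]⟩

lemma nodup_map_range {r : ℕ → V} {k : ℕ} (hir : Set.InjOn r (Set.Iic k)) :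
    ((List.range (k+1)).map r).Nodup := by
  refine List.Nodup.map_on ?_ List.nodup_range
  intro x hx y hy hxy
  exact hir (by simp at hx ⊢; omega) (by simp at hy ⊢; omega) hxy

lemma fun_path_unique (hT : G.IsTree) {r s : ℕ → V} {k m : ℕ}
    (har : ∀ i < k, G.Adj (r i) (r (i+1))) (hir : Set.InjOn r (Set.Iic k))
    (has : ∀ i < m, G.Adj (s i) (s (i+1))) (his : Set.InjOn s (Set.Iic m))
    (h0 : r 0 = s 0) (hk : r k = s m) : k = m ∧ ∀ i ≤ k, r i = s i := by
  obtain ⟨p, hp⟩ := exists_walk_fun G r k har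
  obtain ⟨q, hq⟩ := exists_walk_fun G s m has
  have hpP : p.IsPath := by rw [Walk.isPath_def, hp]; exact nodup_map_range hir
  have hqP : (q.copy h0.symm hk.symm).IsPath := by
    rw [Walk.isPath_def, Walk.support_copy, hq]; exact nodup_map_range his
  have hpq : p = q.copy h0.symm hk.symm := by
    have := hT.IsAcyclic.path_unique ⟨p, hpP⟩ ⟨q.copy h0.symm hk.symm, hqP⟩
    exact congrArg Subtype.val this
  have hsup : (List.range (k+1)).map r = (List.range (m+1)).map s := by
    rw [← hp, hpq, Walk.support_copy, hq]
  have hkm : k = m := by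
    have := congrArg List.length hsup; simpa using this
  subst hkm
  refine ⟨rfl, fun i hi => ?_⟩
  have h1 := congrArg (fun l => l[i]?) hsup
  simp only [List.getElem?_map, List.getElem?_range (by omega : i < k+1)] at h1
  simpa using h1

lemma path_to_fun {u v : V} (p : G.Walk u v) (hp : p.IsPath) :
    ∃ r : ℕ → V, r 0 = u ∧ r p.length = v ∧ (∀ i < p.length, G.Adj (r i) (r (i+1))) ∧
      Set.InjOn r (Set.Iic p.length) ∧ ∀ i ≤ p.length, r i ∈ p.support := by
  induction p with
  | nil =>
    rename_i w
    exact ⟨fun _ => w, rfl, rfl, by simp, fun a ha b hb _ => by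
      simp [Set.mem_Iic] at ha hb; omega, by simp⟩
  | @cons a b c h q ih =>
    rw [Walk.cons_isPath_iff] at hp
    obtain ⟨r', h0, hL, hadj, hinj, hsup⟩ := ih hp.1
    refine ⟨fun n => if n = 0 then a else r' (n-1), by simp, ?_, ?_, ?_, ?_⟩
    · simpa [Walk.length_cons] using hL
    · intro i hi
      rcases Nat.eq_zero_or_pos i with h0' | h0'
      · subst h0'; simpa [h0] using h
      · have e1 : ¬ (i = 0) := by omega
        have e2 : ¬ (i + 1 = 0) := by omega
        simp only [if_neg e1, if_neg e2]
        have e3 : i + 1 - 1 = (i - 1) + 1 := by omega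
        rw [e3]
        exact hadj (i-1) (by simp [Walk.length_cons] at hi; omega)
    · intro x hx y hy hxy
      simp only [Set.mem_Iic, Walk.length_cons] at hx hy
      by_cases ex : x = 0 <;> by_cases ey : y = 0
      · omega
      · exfalso
        simp only [if_pos ex, if_neg ey] at hxy
        exact hp.2 (hxy ▸ hsup (y-1) (by omega))
      · exfalso
        simp only [if_neg ex, if_pos ey] at hxy
        exact hp.2 (hxy ▸ hsup (x-1) (by omega))
      · simp only [if_neg ex, if_neg ey] at hxy
        have := hinj (Set.mem_Iic.mpr (by omega : x - 1 ≤ q.length))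
          (Set.mem_Iic.mpr (by omega : y - 1 ≤ q.length)) hxy
        omega
    · intro i hi
      rcases Nat.eq_zero_or_pos i with h0' | h0'
      · subst h0'; simp
      · have e1 : ¬ (i = 0) := by omega
        simp only [if_neg e1, Walk.support_cons, List.mem_cons]
        exact Or.inr (hsup (i-1) (by simp [Walk.length_cons] at hi; omega))

lemma shift_doubleRay {f : ℤ → V} (hf : IsDoubleRayIn G f) (n0 : ℤ) :
    IsDoubleRayIn G (fun z => f (z + n0)) := by
  refine ⟨fun a b hab => by have := hf.1 hab; omega, fun n => ?_⟩
  show G.Adj (f (n + n0)) (f (n + 1 + n0))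
  rw [show n + 1 + n0 = (n + n0) + 1 by ring]
  exact hf.2 _

lemma two_rays_tstar {w : V} {r s : ℕ → V} (hr0 : r 0 = w) (hs0 : s 0 = w)
    (hri : Function.Injective r) (hsi : Function.Injective s)
    (hra : ∀ n, G.Adj (r n) (r (n+1))) (hsa : ∀ n, G.Adj (s n) (s (n+1)))
    (hdisj : ∀ n m, r n = s m → n = 0 ∧ m = 0) :
    ∀ n, r n ∈ Tstar G ∧ s n ∈ Tstar G := by
  set f : ℤ → V := fun z => if 0 ≤ z then r z.toNat else s (-z).toNat with hf
  have hval_r : ∀ n : ℕ, f (n : ℤ) = r n := fun n => by simp [hf]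
  have hval_s : ∀ n : ℕ, f (-(n : ℤ)) = s n := by
    intro n
    rcases Nat.eq_zero_or_pos n with h | h
    · subst h; simpa [hf] using hr0.trans hs0.symm
    · have h1 : ¬ (0 ≤ -(n:ℤ)) := by omega
      simp only [hf, if_neg h1, neg_neg, Int.toNat_natCast]
  have hinj : Function.Injective f := by
    intro z1 z2 hz
    by_cases h1 : 0 ≤ z1 <;> by_cases h2 : 0 ≤ z2
    · simp only [hf, if_pos h1, if_pos h2] at hz
      have := hri hz; omega
    · simp only [hf, if_pos h1, if_neg h2] at hz
      have := (hdisj _ _ hz).2; omega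
    · simp only [hf, if_neg h1, if_pos h2] at hz
      have := (hdisj _ _ hz.symm).2; omega
    · simp only [hf, if_neg h1, if_neg h2] at hz
      have := hsi hz; omega
  have hadj : ∀ z, G.Adj (f z) (f (z+1)) := by
    intro z
    rcases lt_trichotomy z (-1) with h | h | h
    · have h1 : ¬ (0 ≤ z) := by omega
      have h2 : ¬ (0 ≤ z + 1) := by omega
      have h3 : (-z).toNat = (-(z+1)).toNat + 1 := by omega
      simp only [hf, if_neg h1, if_neg h2, h3]
      exact (hsa _).symm
    · subst h
      have h1 : ¬ (0 ≤ (-1 : ℤ)) := by omega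
      simp only [hf, if_neg h1]
      norm_num
      rw [hr0, ← hs0]
      exact (hsa 0).symm
    · have h1 : 0 ≤ z := by omega
      have h2 : 0 ≤ z + 1 := by omega
      have h3 : (z+1).toNat = z.toNat + 1 := by omega
      simp only [hf, if_pos h1, if_pos h2, h3]
      exact hra _
  intro n
  exact ⟨⟨f, ⟨hinj, hadj⟩, (n : ℤ), hval_r n⟩, ⟨f, ⟨hinj, hadj⟩, -(n : ℤ), hval_s n⟩⟩

lemma exists_avoiding_ray (hT : G.IsTree) {p : ℕ → V} {L : ℕ}
    (hadj : ∀ i < L, G.Adj (p i) (p (i+1))) (hinj : Set.InjOn p (Set.Iic L))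
    {f : ℤ → V} (hf : IsDoubleRayIn G f) (h0 : f 0 = p 0) :
    ∃ ru : ℕ → V, ru 0 = p 0 ∧ Function.Injective ru ∧
      (∀ n, G.Adj (ru n) (ru (n+1))) ∧ (∀ n, ru n ∈ Tstar G) ∧
      ∀ k a, 1 ≤ k → 1 ≤ a → a ≤ L → ru k ≠ p a := by
  obtain ⟨hfi, hfa⟩ := hf
  have hmem : ∀ z : ℤ, f z ∈ Tstar G := fun z => ⟨f, ⟨hfi, hfa⟩, z, rfl⟩
  by_cases hpos : ∃ k a : ℕ, 1 ≤ k ∧ 1 ≤ a ∧ a ≤ L ∧ f (k : ℤ) = p a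
  · -- use the negative ray
    obtain ⟨k, a, hk1, ha1, haL, hka⟩ := hpos
    refine ⟨fun n => f (-(n : ℤ)), by simpa using h0, ?_, ?_, fun n => hmem _, ?_⟩
    · intro n m hnm
      have := hfi hnm; omega
    · intro n
      show G.Adj (f (-(n:ℤ))) (f (-(↑(n+1):ℤ)))
      have h5 := hfa (-(↑(n+1):ℤ))
      rw [show (-(↑(n+1):ℤ)) + 1 = -(n:ℤ) by push_cast; ring] at h5
      exact h5.symm
    · intro k' b hk'1 hb1 hbL hcon
      -- f (-(k')) = p b and f k = p a : contradiction
      rcases le_or_gt b a with hba | hab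
      · -- case b ≤ a
        have hmain := fun_path_unique hT
          (r := fun j => f ((j : ℤ) - (k' : ℤ))) (k := k' + k)
          (s := fun j => p (b + j)) (m := a - b)
          (fun j hj => by
            show G.Adj (f ((j:ℤ) - k')) (f ((↑(j+1):ℤ) - k'))
            rw [show ((↑(j+1):ℤ) - k') = ((j:ℤ) - k') + 1 by push_cast; ring]
            exact hfa _)
          (fun x _ y _ hxy => by have := hfi hxy; omega)
          (fun j hj => hadj (b + j) (by omega))
          (fun x hx y hy hxy => by
            simp only [Set.mem_Iic] at hx hy
            have := hinj (Set.mem_Iic.mpr (by omega : b + x ≤ L))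
              (Set.mem_Iic.mpr (by omega : b + y ≤ L)) hxy
            omega)
          (by simpa using hcon)
          (by
            show f ((↑(k' + k):ℤ) - k') = p (b + (a - b))
            rw [show ((↑(k' + k):ℤ) - k') = (k:ℤ) by push_cast; ring,
              show b + (a - b) = a by omega]
            exact hka)
        obtain ⟨hlen, hpt⟩ := hmain
        have := hpt k' (by omega)
        simp only [sub_self] at this
        rw [h0] at this
        have := hinj (Set.mem_Iic.mpr (by omega : (0:ℕ) ≤ L))
          (Set.mem_Iic.mpr (by omega : b + k' ≤ L)) this
        omega
      · -- case a < b
        have hmain := fun_path_unique hT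
          (r := fun j => f ((k : ℤ) - (j : ℤ))) (k := k + k')
          (s := fun j => p (a + j)) (m := b - a)
          (fun j hj => by
            show G.Adj (f ((k:ℤ) - j)) (f ((k:ℤ) - (↑(j+1):ℤ)))
            have h5 := hfa ((k:ℤ) - (↑(j+1):ℤ))
            rw [show ((k:ℤ) - (↑(j+1):ℤ)) + 1 = (k:ℤ) - (j:ℤ) by push_cast; ring] at h5
            exact h5.symm)
          (fun x _ y _ hxy => by have := hfi hxy; omega)
          (fun j hj => hadj (a + j) (by omega))
          (fun x hx y hy hxy => by
            simp only [Set.mem_Iic] at hx hy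
            have := hinj (Set.mem_Iic.mpr (by omega : a + x ≤ L))
              (Set.mem_Iic.mpr (by omega : a + y ≤ L)) hxy
            omega)
          (by simpa using hka)
          (by
            show f ((k:ℤ) - (↑(k + k'):ℤ)) = p (a + (b - a))
            rw [show ((k:ℤ) - (↑(k + k'):ℤ)) = -(k':ℤ) by push_cast; ring,
              show a + (b - a) = b by omega]
            exact hcon)
        obtain ⟨hlen, hpt⟩ := hmain
        have := hpt k (by omega)
        simp only [sub_self] at this
        rw [h0] at this
        have := hinj (Set.mem_Iic.mpr (by omega : (0:ℕ) ≤ L))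
          (Set.mem_Iic.mpr (by omega : a + k ≤ L)) this
        omega
  · -- use the positive ray
    push_neg at hpos
    refine ⟨fun n => f (n : ℤ), by simpa using h0, ?_, ?_, fun n => hmem _, ?_⟩
    · intro n m hnm
      have := hfi hnm
      exact_mod_cast this
    · intro n
      show G.Adj (f (n:ℤ)) (f ((↑(n+1):ℤ)))
      rw [show ((↑(n+1):ℤ)) = (n:ℤ) + 1 by push_cast; ring]
      exact hfa _
    · intro k a hk1 ha1 haL
      exact hpos k a hk1 ha1 haL

lemma ray_extend {p : ℕ → V} {L : ℕ}
    (hadj : ∀ i < L, G.Adj (p i) (p (i+1))) (hinj : Set.InjOn p (Set.Iic L))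
    {ru : ℕ → V} (h0 : ru 0 = p 0) (hri : Function.Injective ru)
    (hra : ∀ n, G.Adj (ru n) (ru (n+1)))
    (hmeet : ∀ n j, j ≤ L → ru n = p j → n = 0 ∧ j = 0) :
    ∃ q : ℕ → V, q 0 = p L ∧ Function.Injective q ∧ (∀ n, G.Adj (q n) (q (n+1))) ∧
      (∀ n, n < L → q n = p (L - n)) ∧ (∀ n, L ≤ n → q n = ru (n - L)) := by
  refine ⟨fun n => if n < L then p (L - n) else ru (n - L), ?_, ?_, ?_,
    fun n h => by simp [h], fun n h => by simp [Nat.not_lt.mpr h]⟩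
  · rcases Nat.eq_zero_or_pos L with h | h
    · simp [h, h0]
    · simp [h]
  · intro n1 n2 h12
    by_cases e1 : n1 < L <;> by_cases e2 : n2 < L
    · simp only [if_pos e1, if_pos e2] at h12
      have := hinj (Set.mem_Iic.mpr (by omega : L - n1 ≤ L))
        (Set.mem_Iic.mpr (by omega : L - n2 ≤ L)) h12
      omega
    · simp only [if_pos e1, if_neg e2] at h12
      have := hmeet (n2 - L) (L - n1) (by omega) h12.symm
      omega
    · simp only [if_neg e1, if_pos e2] at h12
      have := hmeet (n1 - L) (L - n2) (by omega) h12
      omega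
    · simp only [if_neg e1, if_neg e2] at h12
      have := hri h12
      omega
  · intro n
    by_cases e1 : n + 1 < L
    · have e0 : n < L := by omega
      simp only [if_pos e0, if_pos e1]
      have h5 := hadj (L - (n+1)) (by omega)
      rw [show L - (n+1) + 1 = L - n by omega] at h5
      exact h5.symm
    · by_cases e0 : n < L
      · -- n + 1 = L
        have eL : L = n + 1 := by omega
        simp only [if_pos e0, if_neg e1]
        rw [show L - n = 1 by omega, show n + 1 - L = 0 by omega, h0,
          show (0:ℕ) = L - (n+1) by omega]
        have h5 := hadj (L - (n+1)) (by omega)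
        rw [show L - (n+1) + 1 = L - n by omega, show L - n = 1 by omega] at h5
        rw [show L - (n+1) = 0 by omega] at h5 ⊢
        exact h5.symm
      · simp only [if_neg e0, if_neg e1]
        rw [show n + 1 - L = (n - L) + 1 by omega]
        exact hra _

lemma avoid_to_meet {p : ℕ → V} {L : ℕ} (hinj : Set.InjOn p (Set.Iic L)) {ru : ℕ → V}
    (h0 : ru 0 = p 0) (hri : Function.Injective ru)
    (hav : ∀ k a, 1 ≤ k → 1 ≤ a → a ≤ L → ru k ≠ p a) :
    ∀ n j, j ≤ L → ru n = p j → n = 0 ∧ j = 0 := by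
  intro n j hj hnj
  rcases Nat.eq_zero_or_pos n with hn | hn
  · subst hn
    rw [h0] at hnj
    have := hinj (by simp) (Set.mem_Iic.mpr hj) hnj
    exact ⟨rfl, this.symm⟩
  · rcases Nat.eq_zero_or_pos j with hj0 | hj0
    · subst hj0
      rw [← h0] at hnj
      have := hri hnj
      omega
    · exact absurd hnj (hav n j hn hj0 hj)

lemma mid_tstar (hT : G.IsTree) {p : ℕ → V} {L : ℕ}
    (hadj : ∀ i < L, G.Adj (p i) (p (i+1))) (hinj : Set.InjOn p (Set.Iic L))
    (hu : p 0 ∈ Tstar G) (hv : p L ∈ Tstar G) : ∀ i ≤ L, p i ∈ Tstar G := by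
  intro i hiL
  rcases Nat.eq_zero_or_pos i with h0' | h0'
  · subst h0'; exact hu
  rcases eq_or_lt_of_le hiL with hL' | hL'
  · subst hL'; exact hv
  -- 1 ≤ i < L
  obtain ⟨fu, hfu, nu, hnu⟩ := hu
  obtain ⟨fv, hfv, nv, hnv⟩ := hv
  -- u-side
  have hadj1 : ∀ j < i, G.Adj (p j) (p (j+1)) := fun j hj => hadj j (by omega)
  have hinj1 : Set.InjOn p (Set.Iic i) := hinj.mono (Set.Iic_subset_Iic.mpr (by omega))
  have hf1 : IsDoubleRayIn G (fun z => fu (z + nu)) := shift_doubleRay hfu nu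
  have hf10 : (fun z : ℤ => fu (z + nu)) 0 = p 0 := by simpa using hnu
  obtain ⟨RU, hru0, hrui, hrua, hrut, hruav⟩ := exists_avoiding_ray hT hadj1 hinj1 hf1 hf10
  obtain ⟨Q1, hQ10, hQ1i, hQ1a, hQ1lt, hQ1ge⟩ :=
    ray_extend hadj1 hinj1 hru0 hrui hrua (avoid_to_meet hinj1 hru0 hrui hruav)
  -- v-side
  set M := L - i with hM
  set P2 : ℕ → V := fun j => p (L - j) with hP2
  have hadj2 : ∀ j < M, G.Adj (P2 j) (P2 (j+1)) := by
    intro j hj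
    have h5 := hadj (L - (j+1)) (by omega)
    rw [show L - (j+1) + 1 = L - j by omega] at h5
    exact h5.symm
  have hinj2 : Set.InjOn P2 (Set.Iic M) := by
    intro x hx y hy hxy
    simp only [Set.mem_Iic] at hx hy
    have := hinj (Set.mem_Iic.mpr (by omega : L - x ≤ L))
      (Set.mem_Iic.mpr (by omega : L - y ≤ L)) hxy
    omega
  have hg1 : IsDoubleRayIn G (fun z => fv (z + nv)) := shift_doubleRay hfv nv
  have hg10 : (fun z : ℤ => fv (z + nv)) 0 = P2 0 := by
    simp only [hP2, Nat.sub_zero]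
    simpa using hnv
  obtain ⟨RV, hrv0, hrvi, hrva, hrvt, hrvav⟩ := exists_avoiding_ray hT hadj2 hinj2 hg1 hg10
  obtain ⟨Q2, hQ20, hQ2i, hQ2a, hQ2lt, hQ2ge⟩ :=
    ray_extend hadj2 hinj2 hrv0 hrvi hrva (avoid_to_meet hinj2 hrv0 hrvi hrvav)
  -- both rays start at p i
  have hQ10' : Q1 0 = p i := hQ10
  have hQ20' : Q2 0 = p i := by
    rw [hQ20]
    simp only [hP2]
    congr 1
    omega
  -- second vertices differ
  have hQ11 : Q1 1 = p (i - 1) := by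
    rcases eq_or_lt_of_le (Nat.succ_le_of_lt h0') with h1 | h1
    · rw [hQ1ge 1 (by omega), show 1 - i = 0 from by omega, hru0]
      congr 1
      omega
    · rw [hQ1lt 1 (by omega)]
  have hQ21 : Q2 1 = p (i + 1) := by
    have hM1 : 1 ≤ M := by omega
    rcases eq_or_lt_of_le hM1 with h1 | h1
    · rw [hQ2ge 1 (by omega), show 1 - M = 0 from by omega, hrv0]
      simp only [hP2]
      congr 1
      omega
    · rw [hQ2lt 1 (by omega)]
      simp only [hP2]
      congr 1
      omega
  have hne : Q1 1 ≠ Q2 1 := by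
    rw [hQ11, hQ21]
    intro hcon
    have := hinj (Set.mem_Iic.mpr (by omega : i - 1 ≤ L))
      (Set.mem_Iic.mpr (by omega : i + 1 ≤ L)) hcon
    omega
  -- disjointness
  have hdisj : ∀ n m, Q1 n = Q2 m → n = 0 ∧ m = 0 := by
    intro n m h
    rcases Nat.eq_zero_or_pos n with hn | hn
    · subst hn
      refine ⟨rfl, hQ2i ?_⟩
      rw [← h, hQ10', ← hQ20']
    · exfalso
      have hmain := fun_path_unique hT (r := Q1) (k := n) (s := Q2) (m := m)
        (fun t _ => hQ1a t) hQ1i.injOn (fun t _ => hQ2a t) hQ2i.injOn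
        (hQ10'.trans hQ20'.symm) h
      exact hne (hmain.2 1 (by omega))
  have := (two_rays_tstar hQ10' hQ20' hQ1i hQ2i hQ1a hQ2a hdisj 0).1
  rwa [hQ10'] at this

lemma ray_tstar (hT : G.IsTree) (hdr : ∃ f : ℤ → V, IsDoubleRayIn G f)
    {r : ℕ → V} (hri : Function.Injective r) (hra : ∀ n, G.Adj (r n) (r (n+1))) :
    ∃ n, r n ∈ Tstar G ∧ r (n+1) ∈ Tstar G := by
  classical
  obtain ⟨f, hf⟩ := hdr
  obtain ⟨wk⟩ := hT.isConnected.preconnected (f 0) (r 0)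
  obtain ⟨p, hp0, hpL, hpa, hpi, -⟩ := path_to_fun wk.bypass wk.bypass_isPath
  set L := wk.bypass.length with hLdef
  obtain ⟨RU, hru0, hrui, hrua, hrut, hruav⟩ := exists_avoiding_ray hT hpa hpi hf hp0.symm
  obtain ⟨Q, hQ0, hQi, hQa, hQlt, hQge⟩ :=
    ray_extend hpa hpi hru0 hrui hrua (avoid_to_meet hpi hru0 hrui hruav)
  have hQ0' : Q 0 = r 0 := hQ0.trans hpL
  by_cases hall : ∀ n, r n = Q n
  · refine ⟨L, ?_, ?_⟩
    · rw [hall L, hQge L le_rfl, Nat.sub_self]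
      exact hrut 0
    · rw [hall (L+1), hQge (L+1) (by omega)]
      exact hrut _
  · push_neg at hall
    have hex : ∃ n, r n ≠ Q n := hall
    set m := Nat.find hex with hm
    have hmne : r m ≠ Q m := Nat.find_spec hex
    have hmlt : ∀ t < m, r t = Q t := fun t ht => not_ne_iff.mp (Nat.find_min hex ht)
    have hm1 : 1 ≤ m := by
      rcases Nat.eq_zero_or_pos m with h | h
      · rw [h] at hmne
        exact absurd hQ0'.symm hmne
      · exact h
    have hkey : r (m-1) = Q (m-1) := hmlt (m-1) (by omega)
    have hdisj : ∀ a b, r (m-1+a) = Q (m-1+b) → a = 0 ∧ b = 0 := by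
      intro a b h
      rcases Nat.eq_zero_or_pos a with ha | ha
      · subst ha
        simp only [Nat.add_zero] at h
        refine ⟨rfl, ?_⟩
        have := hQi (h.symm.trans hkey : Q (m-1+b) = Q (m-1))
        omega
      · exfalso
        have hmain := fun_path_unique hT (r := r) (k := m-1+a) (s := Q) (m := m-1+b)
          (fun t _ => hra t) hri.injOn (fun t _ => hQa t) hQi.injOn hQ0'.symm h
        exact hmne (hmain.2 m (by omega))
    have hrays := two_rays_tstar (w := r (m-1))
      (r := fun j => r (m-1+j)) (s := fun j => Q (m-1+j))
      (by simp) (by simpa using hkey.symm)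
      (fun a b hab => by have := hri hab; omega)
      (fun a b hab => by have := hQi hab; omega)
      (fun n => by
        show G.Adj (r (m-1+n)) (r (m-1+(n+1)))
        rw [show m-1+(n+1) = (m-1+n)+1 by omega]
        exact hra _)
      (fun n => by
        show G.Adj (Q (m-1+n)) (Q (m-1+(n+1)))
        rw [show m-1+(n+1) = (m-1+n)+1 by omega]
        exact hQa _)
      hdisj
    refine ⟨m-1, ?_, ?_⟩
    · have := (hrays 0).1
      simpa using this
    · exact (hrays 1).1

lemma reach_induce {S : Set V} :
    ∀ (L : ℕ) (r : ℕ → V) (_ : ∀ i < L, G.Adj (r i) (r (i+1)))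
      (hS : ∀ i ≤ L, r i ∈ S),
      (G.induce S).Reachable ⟨r 0, hS 0 (Nat.zero_le L)⟩ ⟨r L, hS L le_rfl⟩ := by
  intro L
  induction L with
  | zero => intro r _ hS; exact Reachable.refl _
  | succ L ih =>
    intro r hadj hS
    have step : (G.induce S).Adj ⟨r 0, hS 0 (Nat.zero_le _)⟩ ⟨r 1, hS 1 (by omega)⟩ :=
      hadj 0 (by omega)
    have tail := ih (fun n => r (n+1)) (fun i hi => hadj (i+1) (by omega))
      (fun i hi => hS (i+1) (by omega))
    exact step.reachable.trans tail

/-- In a tree with a double ray, `T_*` is a nonempty subtree invariant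
under all automorphisms, and every component of `T − E(T_*)` is rayless. -/
theorem Tstar_properties (G : SimpleGraph V) (hT : G.IsTree)
    (hdr : ∃ f : ℤ → V, IsDoubleRayIn G f) :
    (Tstar G).Nonempty ∧ (G.induce (Tstar G)).Connected ∧
      (∀ φ : G ≃g G, ∀ v ∈ Tstar G, φ v ∈ Tstar G) ∧
      ∀ v : V, Rayless ((G.deleteEdges (TstarEdges G)).induce
        {u | (G.deleteEdges (TstarEdges G)).Reachable v u}) := by
  classical
  obtain ⟨f, hf⟩ := hdr
  refine ⟨⟨f 0, f, hf, 0, rfl⟩, (SimpleGraph.connected_iff _).mpr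
    ⟨fun a b => ?_, ⟨⟨f 0, f, hf, 0, rfl⟩⟩⟩, ?_, ?_⟩
  · obtain ⟨a, ha⟩ := a
    obtain ⟨b, hb⟩ := b
    obtain ⟨wk⟩ := hT.isConnected.preconnected a b
    obtain ⟨p, hp0, hpL, hpa, hpi, -⟩ := path_to_fun wk.bypass wk.bypass_isPath
    have hall : ∀ i ≤ wk.bypass.length, p i ∈ Tstar G :=
      mid_tstar hT hpa hpi (hp0.symm ▸ ha) (hpL.symm ▸ hb)
    have hreach := reach_induce wk.bypass.length p hpa hall
    have e1 : (⟨p 0, hall 0 (Nat.zero_le _)⟩ : ↑(Tstar G)) = ⟨a, ha⟩ := Subtype.ext hp0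
    have e2 : (⟨p wk.bypass.length, hall _ le_rfl⟩ : ↑(Tstar G)) = ⟨b, hb⟩ :=
      Subtype.ext hpL
    rw [← e1, ← e2]
    exact hreach
  · rintro φ v ⟨g, ⟨hgi, hga⟩, n, hgn⟩
    exact ⟨fun z => φ (g z), ⟨fun a b hab => hgi (φ.injective hab),
      fun n => φ.map_adj_iff.mpr (hga n)⟩, n, congrArg (fun x => φ x) hgn⟩
  · intro v r0 hcon
    obtain ⟨hgi, hga⟩ := hcon
    have hri : Function.Injective (fun n => (r0 n : V)) :=
      fun a b hab => hgi (Subtype.ext hab)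
    have hadjd : ∀ n, (G.deleteEdges (TstarEdges G)).Adj (r0 n : V) (r0 (n+1) : V) :=
      fun n => hga n
    have hraG : ∀ n, G.Adj ((fun n => (r0 n : V)) n) ((fun n => (r0 n : V)) (n+1)) :=
      fun n => ((SimpleGraph.deleteEdges_adj).mp (hadjd n)).1
    obtain ⟨n, h1, h2⟩ := ray_tstar hT ⟨f, hf⟩ hri hraG
    have hmem : s((r0 n : V), (r0 (n+1) : V)) ∈ TstarEdges G :=
      ⟨(r0 n : V), (r0 (n+1) : V), rfl, hraG n, h1, h2⟩
    exact ((SimpleGraph.deleteEdges_adj).mp (hadjd n)).2 hmem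
end

section
/- Let (G,w) be a tree-like rooted graph, i.e., every vertex y of G has a neighbor x such that y lies on every shortest path from x to w. Then the set F of edges yx such that y lies on all shortest x–w paths forms a spanning forest of G with no finite components, and every automorphism of G fixing w maps each component of F onto a component of F. -/
open SimpleGraph

universe u

variable {V : Type u}

section AuxProof

variable {G : SimpleGraph V} {w : V}

lemma onAllShortest_dist (hc : G.Connected) {y x : V} (ha : G.Adj y x)
    (h : OnAllShortest G w y x) : G.dist y w + 1 = G.dist x w := by
  classical
  obtain ⟨p, hp⟩ := hc.exists_walk_length_eq_dist x w
  have hy : y ∈ p.support := h p hp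
  have hsplit : (p.takeUntil y hy).length + (p.dropUntil y hy).length = p.length := by
    rw [← SimpleGraph.Walk.length_append, SimpleGraph.Walk.take_spec]
  have h1 : 1 ≤ (p.takeUntil y hy).length := by
    rcases Nat.eq_zero_or_pos (p.takeUntil y hy).length with h0 | hpos
    · exact absurd (SimpleGraph.Walk.eq_of_length_eq_zero h0) ha.ne'
    · exact hpos
  have h2 : G.dist y w ≤ (p.dropUntil y hy).length := SimpleGraph.dist_le _
  obtain ⟨q, hq⟩ := hc.exists_walk_length_eq_dist y w
  have h3 : G.dist x w ≤ G.dist y w + 1 := by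
    have := SimpleGraph.dist_le (SimpleGraph.Walk.cons ha.symm q)
    simpa [hq] using this
  omega

lemma parent_unique (hc : G.Connected) {y y' x : V}
    (ha : G.Adj y x) (h : OnAllShortest G w y x)
    (ha' : G.Adj y' x) (h' : OnAllShortest G w y' x) : y = y' := by
  classical
  obtain ⟨r, hr⟩ := hc.exists_walk_length_eq_dist y w
  have hd := onAllShortest_dist hc ha h
  have hd' := onAllShortest_dist hc ha' h'
  have hq : (SimpleGraph.Walk.cons ha.symm r).length = G.dist x w := by
    simp only [SimpleGraph.Walk.length_cons, hr]; omega
  have hy' : y' ∈ (SimpleGraph.Walk.cons ha.symm r).support := h' _ hq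
  rw [SimpleGraph.Walk.support_cons, List.mem_cons] at hy'
  rcases hy' with heq | hy'
  · exact absurd heq ha'.ne
  · have hsplit : (r.takeUntil y' hy').length + (r.dropUntil y' hy').length = r.length := by
      rw [← SimpleGraph.Walk.length_append, SimpleGraph.Walk.take_spec]
    have h2 : G.dist y' w ≤ (r.dropUntil y' hy').length := SimpleGraph.dist_le _
    have h0 : (r.takeUntil y' hy').length = 0 := by omega
    exact SimpleGraph.Walk.eq_of_length_eq_zero h0

lemma dist_iso (hc : G.Connected) (φ : G ≃g G) (a b : V) :
    G.dist (φ a) (φ b) = G.dist a b := by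
  have key : ∀ (ψ : G ≃g G) (a b : V), G.dist (ψ a) (ψ b) ≤ G.dist a b := by
    intro ψ a b
    obtain ⟨p, hp⟩ := hc.exists_walk_length_eq_dist a b
    calc G.dist (ψ a) (ψ b) ≤ (p.map ψ.toHom).length := SimpleGraph.dist_le _
      _ = G.dist a b := by rw [SimpleGraph.Walk.length_map, hp]
  refine le_antisymm (key φ a b) ?_
  have := key φ.symm (φ a) (φ b)
  simpa using this

lemma onAllShortest_iso (hc : G.Connected) (φ : G ≃g G) (hw : φ w = w) {y x : V}
    (h : OnAllShortest G w y x) : OnAllShortest G w (φ y) (φ x) := by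
  intro p hp
  have hw' : φ.symm w = w := φ.toEquiv.symm_apply_eq.mpr hw.symm
  have hxx : φ.symm (φ x) = x := by simp
  have q : G.Walk x w := (p.map φ.symm.toHom).copy hxx hw'
  have hdx : G.dist (φ x) w = G.dist x w := by
    conv_lhs => rw [← hw]
    exact dist_iso hc φ x w
  have hqlen : ((p.map φ.symm.toHom).copy hxx hw').length = G.dist x w := by
    rw [SimpleGraph.Walk.length_copy, SimpleGraph.Walk.length_map, hp, hdx]
  have hy : y ∈ ((p.map φ.symm.toHom).copy hxx hw').support := h _ hqlen
  rw [SimpleGraph.Walk.support_copy, SimpleGraph.Walk.support_map] at hy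
  obtain ⟨z, hz, hzy⟩ := List.mem_map.mp hy
  have : φ y = z := by rw [← hzy]; simp
  rw [this]
  exact hz

end AuxProof

/-- In a tree-like rooted graph `(G,w)`, the edges `yx` such that `y` lies
on all shortest `x`–`w` paths form a spanning forest of `G` without finite components,
and every automorphism of `G` fixing `w` maps components of this forest onto components. -/
theorem tree_like_forest (G : SimpleGraph V) (hc : G.Connected) (w : V)
    (htl : ∀ y, ∃ x, G.Adj y x ∧ OnAllShortest G w y x) :
    (∀ u v, (SimpleGraph.fromRel (fun y x => G.Adj y x ∧ OnAllShortest G w y x)).Adj u v →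
        G.Adj u v) ∧
      (SimpleGraph.fromRel (fun y x => G.Adj y x ∧ OnAllShortest G w y x)).IsAcyclic ∧
      (∀ y, ∃ x,
        (SimpleGraph.fromRel (fun y x => G.Adj y x ∧ OnAllShortest G w y x)).Adj y x) ∧
      (∀ v, {u | (SimpleGraph.fromRel
        (fun y x => G.Adj y x ∧ OnAllShortest G w y x)).Reachable v u}.Infinite) ∧
      (∀ φ : G ≃g G, φ w = w → ∀ u v,
        ((SimpleGraph.fromRel (fun y x => G.Adj y x ∧ OnAllShortest G w y x)).Reachable u v ↔
          (SimpleGraph.fromRel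
            (fun y x => G.Adj y x ∧ OnAllShortest G w y x)).Reachable (φ u) (φ v))) := by
  classical
  set F := SimpleGraph.fromRel (fun y x => G.Adj y x ∧ OnAllShortest G w y x) with hF
  have hFadj : ∀ u v, F.Adj u v ↔ u ≠ v ∧
      ((G.Adj u v ∧ OnAllShortest G w u v) ∨ (G.Adj v u ∧ OnAllShortest G w v u)) :=
    fun u v => SimpleGraph.fromRel_adj _ u v
  have hsub : ∀ u v, F.Adj u v → G.Adj u v := by
    intro u v huv
    rcases (hFadj u v).mp huv with ⟨_, ⟨h, _⟩ | ⟨h, _⟩⟩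
    exacts [h, h.symm]
  have hdown : ∀ m s, F.Adj m s → G.dist s w ≤ G.dist m w →
      G.Adj s m ∧ OnAllShortest G w s m := by
    intro m s hms hle
    rcases (hFadj m s).mp hms with ⟨hne, ⟨h1, h2⟩ | hr⟩
    · exfalso; have := onAllShortest_dist hc h1 h2; omega
    · exact hr
  have hacyc : F.IsAcyclic := by
    intro a c hcyc
    obtain ⟨m, hmF, hmax⟩ := c.support.toFinset.exists_max_image (fun u => G.dist u w)
      ⟨a, List.mem_toFinset.mpr c.start_mem_support⟩
    rw [List.mem_toFinset] at hmF
    have hmax' : ∀ u ∈ c.support, G.dist u w ≤ G.dist m w := by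
      intro u hu; exact hmax u (List.mem_toFinset.mpr hu)
    have hc' : (c.rotate m hmF).IsCycle := hcyc.rotate hmF
    have hsupp : ∀ u, u ∈ (c.rotate m hmF).support → G.dist u w ≤ G.dist m w := by
      intro u hu
      rw [SimpleGraph.Walk.support_eq_cons, List.mem_cons] at hu
      rcases hu with rfl | hu
      · exact le_refl _
      · have h2 : u ∈ c.support.tail :=
          (SimpleGraph.Walk.support_rotate c m hmF).mem_iff.mp hu
        exact hmax' u (List.mem_of_mem_tail h2)
    obtain ⟨s, hms, p, hcp⟩ := SimpleGraph.Walk.not_nil_iff.mp hc'.not_nil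
    have hcyc2 : (SimpleGraph.Walk.cons hms p).IsCycle := hcp ▸ hc'
    have hpp := (SimpleGraph.Walk.cons_isCycle_iff p hms).mp hcyc2
    have hpnn : ¬ p.reverse.Nil := SimpleGraph.Walk.not_nil_of_ne hms.ne
    have hmt : F.Adj m (p.reverse.getVert 1) := p.reverse.adj_snd hpnn
    have hedge : s(m, p.reverse.getVert 1) ∈ p.reverse.edges := by
      have h0 : s(m, p.reverse.getVert 1) ∈
          (SimpleGraph.Walk.cons (p.reverse.adj_snd hpnn) p.reverse.tail).edges := by
        rw [SimpleGraph.Walk.edges_cons]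
        exact List.mem_cons_self
      rwa [SimpleGraph.Walk.cons_tail_eq p.reverse hpnn] at h0
    have hedge' : s(m, p.reverse.getVert 1) ∈ p.edges := by
      rwa [SimpleGraph.Walk.edges_reverse, List.mem_reverse] at hedge
    have hst : s ≠ p.reverse.getVert 1 := by
      intro h
      apply hpp.2
      have heq : s(m, s) = s(m, p.reverse.getVert 1) := congrArg (fun z => s(m, z)) h
      rw [heq]
      exact hedge'
    have ht_mem : p.reverse.getVert 1 ∈ p.support :=
      p.snd_mem_support_of_mem_edges hedge'
    have hsupp2 : ∀ u ∈ p.support, G.dist u w ≤ G.dist m w := by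
      intro u hu
      apply hsupp
      rw [hcp, SimpleGraph.Walk.support_cons]
      exact List.mem_cons_of_mem _ hu
    have rel_s := hdown m s hms (hsupp2 s p.start_mem_support)
    have rel_t := hdown m (p.reverse.getVert 1) hmt
      (hsupp2 _ ht_mem)
    exact hst (parent_unique hc rel_s.1 rel_s.2 rel_t.1 rel_t.2)
  have hchild : ∀ y, ∃ x, F.Adj y x ∧ G.dist y w + 1 = G.dist x w := by
    intro y
    obtain ⟨x, hax, hsh⟩ := htl y
    exact ⟨x, (hFadj y x).mpr ⟨hax.ne, Or.inl ⟨hax, hsh⟩⟩,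
      onAllShortest_dist hc hax hsh⟩
  have hinf : ∀ v, {u | F.Reachable v u}.Infinite := by
    intro v
    choose g hgadj hgdist using hchild
    have hdist : ∀ n, G.dist (g^[n] v) w = G.dist v w + n := by
      intro n
      induction n with
      | zero => simp
      | succ n ih =>
        rw [Function.iterate_succ_apply', ← hgdist (g^[n] v), ih]
        omega
    have hreach : ∀ n, F.Reachable v (g^[n] v) := by
      intro n
      induction n with
      | zero => rw [Function.iterate_zero_apply]
      | succ n ih =>
        rw [Function.iterate_succ_apply']
        exact ih.trans (hgadj (g^[n] v)).reachable
    have hinj : Function.Injective (fun n => g^[n] v) := by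
      intro a b hab
      have hda := hdist a
      have hdb := hdist b
      simp only at hab
      rw [hab, hdb] at hda
      omega
    exact Set.infinite_of_injective_forall_mem hinj hreach
  have hforward : ∀ (φ : G ≃g G), φ w = w → ∀ u v,
      F.Reachable u v → F.Reachable (φ u) (φ v) := by
    intro φ hw u v huv
    have hmap : ∀ a b, F.Adj a b → F.Adj (φ a) (φ b) := by
      intro a b hab
      rcases (hFadj a b).mp hab with ⟨hne, ⟨h1, h2⟩ | ⟨h1, h2⟩⟩
      · exact (hFadj _ _).mpr ⟨fun h => hne (φ.injective h),
          Or.inl ⟨φ.map_adj_iff.mpr h1, onAllShortest_iso hc φ hw h2⟩⟩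
      · exact (hFadj _ _).mpr ⟨fun h => hne (φ.injective h),
          Or.inr ⟨φ.map_adj_iff.mpr h1, onAllShortest_iso hc φ hw h2⟩⟩
    exact huv.map ⟨φ.toEquiv.toFun, fun {a b} h => hmap a b h⟩
  refine ⟨hsub, hacyc, fun y => ?_, hinf, ?_⟩
  · obtain ⟨x, hx, _⟩ := hchild y
    exact ⟨x, hx⟩
  · intro φ hw u v
    constructor
    · exact hforward φ hw u v
    · intro h
      have hw' : φ.symm w = w := φ.toEquiv.symm_apply_eq.mpr hw.symm
      have := hforward φ.symm hw' _ _ h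
      simpa using this
end

section
/- Let G be a tree-like graph with all degrees at most 2^{ℵ₀}. Then G has exactly 2^{|V(G)|} pairwise inequivalent asymmetrizing sets; in particular G is asymmetrizable. -/
open SimpleGraph

universe u

variable {V : Type u}

namespace TLA


/-- The coding stream: bits are encoded in blocks of length 7. -/
def stream (d : ℕ → Bool) (k : ℕ) : Bool :=
  if k % 7 = 2 then d (k / 7)
  else if k % 7 = 3 then !(d (k / 7))
  else if k % 7 = 6 then false
  else true

lemma stream_zero (d : ℕ → Bool) : stream d 0 = true := rfl

lemma stream_at_two (d : ℕ → Bool) (j : ℕ) : stream d (7 * j + 2) = d j := by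
  have h1 : (7 * j + 2) % 7 = 2 := by omega
  have h2 : (7 * j + 2) / 7 = j := by omega
  simp [stream, h1, h2]

lemma stream_succ_of_false (d : ℕ → Bool) (k : ℕ) (h : stream d k = false) :
    stream d (k + 1) = true := by
  unfold stream at h ⊢
  rcases (show k % 7 = 0 ∨ k % 7 = 1 ∨ k % 7 = 2 ∨ k % 7 = 3 ∨ k % 7 = 4 ∨ k % 7 = 5 ∨
      k % 7 = 6 by omega) with h7 | h7 | h7 | h7 | h7 | h7 | h7
  · simp [h7] at h
  · simp [h7] at h
  · have e1 : (k + 1) % 7 = 3 := by omega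
    have e2 : (k + 1) / 7 = k / 7 := by omega
    simp [h7] at h
    simp [e1, e2, h]
  · have e1 : (k + 1) % 7 = 4 := by omega
    simp [e1]
  · simp [h7] at h
  · simp [h7] at h
  · have e1 : (k + 1) % 7 = 0 := by omega
    simp [e1]

lemma stream_true_nbr (d : ℕ → Bool) (k : ℕ) (h : stream d k = true) :
    stream d (k + 1) = true ∨ ∃ j, k = j + 1 ∧ stream d j = true := by
  unfold stream at h ⊢
  rcases (show k % 7 = 0 ∨ k % 7 = 1 ∨ k % 7 = 2 ∨ k % 7 = 3 ∨ k % 7 = 4 ∨ k % 7 = 5 ∨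
      k % 7 = 6 by omega) with h7 | h7 | h7 | h7 | h7 | h7 | h7
  · left
    have e1 : (k + 1) % 7 = 1 := by omega
    simp [e1]
  · right
    refine ⟨k - 1, by omega, ?_⟩
    have e1 : (k - 1) % 7 = 0 := by omega
    simp [e1]
  · right
    refine ⟨k - 1, by omega, ?_⟩
    have e1 : (k - 1) % 7 = 1 := by omega
    simp [e1]
  · left
    have e1 : (k + 1) % 7 = 4 := by omega
    simp [e1]
  · left
    have e1 : (k + 1) % 7 = 5 := by omega
    simp [e1]
  · right
    refine ⟨k - 1, by omega, ?_⟩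
    have e1 : (k - 1) % 7 = 4 := by omega
    simp [e1]
  · simp [h7] at h



/-- A choice of a "solitary child" for each vertex of a rooted tree-like graph. -/
structure Nice (G : SimpleGraph V) (w : V) (c : V → V) : Prop where
  conn : G.Connected
  adj : ∀ y, G.Adj y (c y)
  depth : ∀ y, G.dist (c y) w = G.dist y w + 1
  uniq : ∀ y z, G.Adj z (c y) → G.dist z w + 1 = G.dist (c y) w → z = y

variable {G : SimpleGraph V} {w : V} {c : V → V}

lemma Nice.c_inj (hN : Nice G w c) : Function.Injective c := by
  intro a b hab
  have h1 : G.Adj a (c b) := hab ▸ hN.adj a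
  have h2 : G.dist a w + 1 = G.dist (c b) w := by rw [← hab, hN.depth a]
  exact hN.uniq b a h1 h2

lemma Nice.dist_iterate (hN : Nice G w c) (k : ℕ) (v : V) :
    G.dist (c^[k] v) w = G.dist v w + k := by
  induction k with
  | zero => simp
  | succ n ih => rw [Function.iterate_succ_apply', hN.depth, ih]; omega

/-- A head: a vertex which is not the chosen child of any vertex. -/
def Head (c : V → V) (v : V) : Prop := v ∉ Set.range c

lemma Nice.head_w (hN : Nice G w c) : Head c w := by
  rintro ⟨u, hu⟩
  have := hN.depth u
  rw [hu] at this
  simp [SimpleGraph.dist_self] at this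

lemma Nice.exists_decomp (hN : Nice G w c) (v : V) :
    ∃ p : V × ℕ, Head c p.1 ∧ c^[p.2] p.1 = v := by
  have H : ∀ n v, G.dist v w = n → ∃ p : V × ℕ, Head c p.1 ∧ c^[p.2] p.1 = v := by
    intro n
    induction n using Nat.strong_induction_on with
    | _ n ih =>
      intro v hv
      by_cases hr : v ∈ Set.range c
      · obtain ⟨u, rfl⟩ := hr
        have hd := hN.depth u
        obtain ⟨⟨h, k⟩, hh, hk⟩ := ih (G.dist u w) (by omega) u rfl
        exact ⟨⟨h, k + 1⟩, hh, by rw [Function.iterate_succ_apply', hk]⟩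
      · exact ⟨⟨v, 0⟩, hr, rfl⟩
  exact H _ v rfl

lemma Nice.decomp_unique (hN : Nice G w c) :
    ∀ k k' h h', Head c h → Head c h' → c^[k] h = c^[k'] h' → h = h' ∧ k = k' := by
  intro k
  induction k with
  | zero =>
    intro k' h h' hh hh' he
    cases k' with
    | zero => exact ⟨he, rfl⟩
    | succ m =>
      exfalso
      rw [Function.iterate_succ_apply'] at he
      exact hh ⟨_, he.symm⟩
  | succ m ih =>
    intro k' h h' hh hh' he
    cases k' with
    | zero =>
      exfalso
      rw [Function.iterate_succ_apply'] at he
      exact hh' ⟨_, he⟩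
    | succ m' =>
      rw [Function.iterate_succ_apply', Function.iterate_succ_apply'] at he
      obtain ⟨e1, e2⟩ := ih m' h h' hh hh' (hN.c_inj he)
      exact ⟨e1, by omega⟩

open Classical in
/-- The head and position of a vertex on its chain. -/
noncomputable def hdp (c : V → V) (v : V) : V × ℕ :=
  if h : ∃ p : V × ℕ, Head c p.1 ∧ c^[p.2] p.1 = v then Classical.choose h else (v, 0)

lemma Nice.hdp_spec (hN : Nice G w c) (v : V) :
    Head c (hdp c v).1 ∧ c^[(hdp c v).2] (hdp c v).1 = v := by
  rw [hdp]
  rw [dif_pos (hN.exists_decomp v)]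
  exact Classical.choose_spec (hN.exists_decomp v)

lemma Nice.hdp_eq (hN : Nice G w c) {h : V} (hh : Head c h) (k : ℕ) :
    hdp c (c^[k] h) = (h, k) := by
  obtain ⟨h1, h2⟩ := hN.hdp_spec (c^[k] h)
  obtain ⟨e1, e2⟩ := hN.decomp_unique _ _ _ _ h1 hh h2
  ext
  · exact e1
  · exact e2

/-- The tape of the chain with head `h`: position 0 marks the root's chain,
position 1 is blank, and from position 2 on the data stream is written. -/
def tp (w : V) (dat : V → ℕ → Bool) (h : V) (k : ℕ) : Prop :=
  if k = 0 then h = w else if k = 1 then False else stream (dat h) (k - 2) = true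

lemma tp_zero {w : V} {dat : V → ℕ → Bool} {h : V} : tp w dat h 0 ↔ h = w := by simp [tp]

lemma tp_one {w : V} {dat : V → ℕ → Bool} {h : V} : ¬ tp w dat h 1 := by simp [tp]

lemma tp_add_two {w : V} {dat : V → ℕ → Bool} {h : V} (m : ℕ) :
    tp w dat h (m + 2) ↔ stream (dat h) m = true := by
  have h0 : m + 2 ≠ 0 := by omega
  have h1 : m + 2 ≠ 1 := by omega
  simp [tp, h0, h1]

/-- The asymmetrizing sets we construct. -/
def SA (w : V) (c : V → V) (dat : V → ℕ → Bool) : Set V :=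
  {v | tp w dat (hdp c v).1 (hdp c v).2}

variable {dat : V → ℕ → Bool}

lemma Nice.mem_SA (hN : Nice G w c) {h : V} (hh : Head c h) (k : ℕ) :
    c^[k] h ∈ SA w c dat ↔ tp w dat h k := by
  change tp w dat (hdp c (c^[k] h)).1 (hdp c (c^[k] h)).2 ↔ _
  rw [hN.hdp_eq hh k]

lemma adj_dist_le (hc : G.Connected) {a b : V} (hadj : G.Adj a b) :
    G.dist a w ≤ G.dist b w + 1 := by
  obtain ⟨q, hq⟩ := hc.exists_walk_length_eq_dist b w
  have := SimpleGraph.dist_le (SimpleGraph.Walk.cons hadj q)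
  simpa [hq] using this

lemma w_nbr_depth (hc : G.Connected) {u : V} (hadj : G.Adj w u) : G.dist u w = 1 := by
  have h1 : G.dist u w ≤ G.dist w w + 1 := adj_dist_le hc hadj.symm
  have h2 : 0 < G.dist u w := hc.pos_dist_of_ne hadj.ne'
  rw [SimpleGraph.dist_self] at h1
  omega

lemma parent_exists (hc : G.Connected) {v : V} (hv : v ≠ w) :
    ∃ p, G.Adj p v ∧ G.dist p w + 1 = G.dist v w := by
  obtain ⟨q, hq⟩ := hc.exists_walk_length_eq_dist v w
  have hd : 0 < G.dist v w := hc.pos_dist_of_ne hv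
  cases q with
  | nil => simp [SimpleGraph.dist_self] at hd
  | @cons _ b _ hadj q' =>
    have hlen : q'.length + 1 = G.dist v w := by simpa using hq
    have h1 : G.dist b w ≤ q'.length := SimpleGraph.dist_le q'
    have h2 : G.dist v w ≤ G.dist b w + 1 := adj_dist_le hc hadj
    exact ⟨b, hadj.symm, by omega⟩

lemma Nice.child_cases (hN : Nice G w c) {y z : V} (hadj : G.Adj y z)
    (hd : G.dist z w = G.dist y w + 1) : z = c y ∨ Head c z := by
  by_cases hr : z ∈ Set.range c
  · obtain ⟨u, rfl⟩ := hr
    left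
    have hy : y = u := hN.uniq u y hadj (by omega)
    rw [hy]
  · right; exact hr

lemma iso_dist (hc : G.Connected) (φ : G ≃g G) (a b : V) :
    G.dist (φ a) (φ b) = G.dist a b := by
  have key : ∀ (ψ : G ≃g G) (x y : V), G.dist (ψ x) (ψ y) ≤ G.dist x y := by
    intro ψ x y
    obtain ⟨p, hp⟩ := hc.exists_walk_length_eq_dist x y
    have := SimpleGraph.dist_le (p.map ψ.toHom)
    rwa [SimpleGraph.Walk.length_map, hp] at this
  refine le_antisymm (key φ a b) ?_
  have := key φ.symm (φ a) (φ b)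
  simpa using this

lemma Nice.w_mem_SA (hN : Nice G w c) : w ∈ SA w c dat := by
  have h1 : (c^[0] w : V) ∈ SA w c dat ↔ tp w dat w 0 := hN.mem_SA hN.head_w 0
  simp only [Function.iterate_zero_apply] at h1
  rw [h1, tp_zero]

lemma Nice.w_nbr_not_mem (hN : Nice G w c) {u : V} (hadj : G.Adj w u) :
    u ∉ SA w c dat := by
  obtain ⟨⟨h, k⟩, hh, hv⟩ := hN.exists_decomp u
  subst hv
  have hd : G.dist (c^[k] h) w = 1 := w_nbr_depth hN.conn hadj
  rw [hN.dist_iterate] at hd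
  intro hmem
  rw [hN.mem_SA hh] at hmem
  match k, hmem with
  | 0, hmem =>
    have : h = w := tp_zero.mp hmem
    subst this
    simp [SimpleGraph.dist_self] at hd
  | 1, hmem => exact tp_one hmem
  | m + 2, _ => omega

lemma Nice.mem_SA_nbr (hN : Nice G w c) {v : V} (hv : v ∈ SA w c dat) (hvw : v ≠ w) :
    ∃ u, G.Adj v u ∧ u ∈ SA w c dat := by
  obtain ⟨⟨h, k⟩, hh, he⟩ := hN.exists_decomp v
  subst he
  rw [hN.mem_SA hh] at hv
  match k, hv, hvw with
  | 0, hv, hvw => exact absurd (tp_zero.mp hv) hvw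
  | 1, hv, _ => exact absurd hv tp_one
  | m + 2, hv, _ =>
    have hs : stream (dat h) m = true := (tp_add_two m).mp hv
    rcases stream_true_nbr (dat h) m hs with hnext | ⟨j, rfl, hj⟩
    · refine ⟨c (c^[m + 2] h), hN.adj _, ?_⟩
      have he : c (c^[m + 2] h) = c^[m + 3] h := (Function.iterate_succ_apply' c (m + 2) h).symm
      rw [he, hN.mem_SA hh, tp_add_two (m + 1)]
      exact hnext
    · refine ⟨c^[j + 2] h, ?_, ?_⟩
      · have he : c^[j + 1 + 2] h = c (c^[j + 2] h) := Function.iterate_succ_apply' c (j + 2) h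
        rw [he]
        exact (hN.adj _).symm
      · rw [hN.mem_SA hh, tp_add_two j]
        exact hj

/-- The property identifying the chosen child among the children of a vertex. -/
def P1 (G : SimpleGraph V) (w : V) (X : Set V) (z : V) : Prop :=
  z ∈ X ∨ ∃ u, G.Adj z u ∧ G.dist u w = G.dist z w + 1 ∧ u ∈ X

lemma Nice.P1_child (hN : Nice G w c) (v : V) : P1 G w (SA w c dat) (c v) := by
  obtain ⟨⟨h, k⟩, hh, he⟩ := hN.exists_decomp v
  subst he
  have hcv : c (c^[k] h) = c^[k + 1] h := (Function.iterate_succ_apply' c k h).symm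
  match k with
  | 0 =>
    right
    refine ⟨c (c (c^[0] h)), hN.adj _, ⟨hN.depth _, ?_⟩⟩
    have e2 : c (c (c^[0] h)) = c^[2] h := by
      simp only [Function.iterate_zero_apply]
      rw [show (2 : ℕ) = 1 + 1 from rfl, Function.iterate_succ_apply',
        Function.iterate_one]
    rw [e2, hN.mem_SA hh, tp_add_two 0]
    exact stream_zero _
  | m + 1 =>
    rw [hcv]
    by_cases hs : stream (dat h) m = true
    · left
      rw [hN.mem_SA hh, tp_add_two m]
      exact hs
    · right
      refine ⟨c (c^[m + 2] h), hN.adj _, ⟨hN.depth _, ?_⟩⟩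
      have e2 : c (c^[m + 2] h) = c^[m + 3] h := (Function.iterate_succ_apply' c (m + 2) h).symm
      rw [e2, hN.mem_SA hh, tp_add_two (m + 1)]
      exact stream_succ_of_false _ _ (by revert hs; cases stream (dat h) m <;> simp)

lemma Nice.P1_head_false (hN : Nice G w c) {z : V} (hh : Head c z) (hzw : z ≠ w) :
    ¬ P1 G w (SA w c dat) z := by
  rintro (hz | ⟨u, hadj, hd, hu⟩)
  · have h0 : (c^[0] z : V) = z := rfl
    rw [← h0, hN.mem_SA hh, tp_zero] at hz
    exact hzw hz
  · rcases hN.child_cases hadj hd with he | hhu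
    · rw [he] at hu
      have h1 : c z = c^[1] z := rfl
      rw [h1, hN.mem_SA hh] at hu
      exact tp_one hu
    · have h0 : (c^[0] u : V) = u := rfl
      rw [← h0, hN.mem_SA hhu, tp_zero] at hu
      subst hu
      rw [SimpleGraph.dist_self] at hd
      omega

lemma Nice.P1_iff (hN : Nice G w c) {v z : V} (hadj : G.Adj v z)
    (hd : G.dist z w = G.dist v w + 1) : P1 G w (SA w c dat) z ↔ z = c v := by
  constructor
  · intro hp
    rcases hN.child_cases hadj hd with he | hh
    · exact he
    · exfalso
      refine hN.P1_head_false hh ?_ hp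
      intro hzw
      subst hzw
      rw [SimpleGraph.dist_self] at hd
      omega
  · rintro rfl
    exact hN.P1_child v

open Classical in
/-- The data written on the chain with head `h`: even positions carry the "name" of `h`,
odd positions record which vertices of the chain belong to `A`. -/
noncomputable def datf (name : V → ℕ → Bool) (c : V → V) (A : Set V) : V → ℕ → Bool :=
  fun h n => if n % 2 = 0 then name h (n / 2)
    else if c^[n / 2] h ∈ A then true else false

lemma datf_even (name : V → ℕ → Bool) (c : V → V) (A : Set V) (h : V) (n : ℕ) :
    datf name c A h (2 * n) = name h n := by
  have h1 : (2 * n) % 2 = 0 := by omega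
  have h2 : (2 * n) / 2 = n := by omega
  simp [datf, h1, h2]

lemma datf_odd (name : V → ℕ → Bool) (c : V → V) (A : Set V) (h : V) (n : ℕ) :
    datf name c A h (2 * n + 1) = true ↔ c^[n] h ∈ A := by
  have h1 : (2 * n + 1) % 2 = 1 := by omega
  have h2 : (2 * n + 1) / 2 = n := by omega
  simp only [datf, h1, h2]
  by_cases hA : c^[n] h ∈ A <;> simp [hA, h2]

/-- The master rigidity lemma: an automorphism carrying `SA A` to `SA B`
is the identity, and then `A = B`. -/
theorem Nice.master (hN : Nice G w c) {name : V → ℕ → Bool}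
    (hname : Function.Injective name) (A B : Set V) (φ : G ≃g G)
    (hpres : ∀ v, v ∈ SA w c (datf name c A) ↔ φ v ∈ SA w c (datf name c B)) :
    (∀ v, φ v = v) ∧ A = B := by
  have hw : φ w = w := by
    by_contra hne
    have h1 : φ w ∈ SA w c (datf name c B) := (hpres w).mp hN.w_mem_SA
    obtain ⟨u, hadj, hu⟩ := hN.mem_SA_nbr h1 hne
    have h2 : φ (φ.symm u) = u := φ.apply_symm_apply u
    have hadj' : G.Adj w (φ.symm u) := by
      rw [← φ.map_adj_iff, h2]
      exact hadj
    have h3 : φ.symm u ∈ SA w c (datf name c A) := by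
      rw [hpres, h2]
      exact hu
    exact hN.w_nbr_not_mem hadj' h3
  have hdist : ∀ v, G.dist (φ v) w = G.dist v w := by
    intro v
    conv_lhs => rw [← hw]
    exact iso_dist hN.conn φ v w
  have hcomm : ∀ v, φ (c v) = c (φ v) := by
    intro v
    have hadj : G.Adj (φ v) (φ (c v)) := φ.map_adj_iff.mpr (hN.adj v)
    have hd : G.dist (φ (c v)) w = G.dist (φ v) w + 1 := by
      rw [hdist, hdist, hN.depth]
    rw [← hN.P1_iff hadj hd]
    rcases hN.P1_child (dat := datf name c A) v with hz | ⟨u, hadj2, hd2, hu⟩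
    · left
      exact (hpres _).mp hz
    · right
      refine ⟨φ u, φ.map_adj_iff.mpr hadj2, ?_, (hpres u).mp hu⟩
      rw [hdist, hdist]
      exact hd2
  have hcommIter : ∀ k v, φ (c^[k] v) = c^[k] (φ v) := by
    intro k
    induction k with
    | zero => simp
    | succ n ih =>
      intro v
      rw [Function.iterate_succ_apply', Function.iterate_succ_apply', hcomm, ih]
  have hheads : ∀ h, Head c h → Head c (φ h) := by
    rintro h hh ⟨u, hu⟩
    obtain ⟨u0, hu0⟩ : ∃ u0, φ u0 = u := ⟨φ.symm u, φ.apply_symm_apply u⟩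
    apply hh
    refine ⟨u0, φ.injective ?_⟩
    rw [hcomm, hu0]
    exact hu
  have hfix : ∀ h, Head c h → φ h = h ∧ datf name c A h = datf name c B h := by
    intro h hh
    have hh' := hheads h hh
    have htp : ∀ k, tp w (datf name c A) h k ↔ tp w (datf name c B) (φ h) k := by
      intro k
      rw [← hN.mem_SA hh, ← hN.mem_SA hh', ← hcommIter k h]
      exact hpres _
    have hstream : ∀ m, stream (datf name c A h) m = stream (datf name c B (φ h)) m := by
      intro m
      have h3 := htp (m + 2)
      rw [tp_add_two, tp_add_two] at h3
      cases hx : stream (datf name c A h) m <;>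
        cases hy : stream (datf name c B (φ h)) m <;> simp_all
    have hdat : datf name c A h = datf name c B (φ h) := by
      funext j
      rw [← stream_at_two (datf name c A h) j, ← stream_at_two (datf name c B (φ h)) j,
        hstream]
    have hnm : name h = name (φ h) := by
      funext j
      have h4 := congrFun hdat (2 * j)
      rwa [datf_even, datf_even] at h4
    have he : φ h = h := (hname hnm).symm
    rw [he] at hdat
    exact ⟨he, hdat⟩
  have hid : ∀ v, φ v = v := by
    intro v
    obtain ⟨⟨h, k⟩, hh, he⟩ := hN.exists_decomp v
    subst he
    rw [hcommIter, (hfix h hh).1]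
  refine ⟨hid, ?_⟩
  ext v
  obtain ⟨⟨h, k⟩, hh, he⟩ := hN.exists_decomp v
  subst he
  have h5 := congrFun ((hfix h hh).2) (2 * k + 1)
  rw [← datf_odd name c A h k, ← datf_odd name c B h k, h5]

lemma child_depth (hc : G.Connected) {y x : V} (hadj : G.Adj y x)
    (hosa : OnAllShortest G w y x) : G.dist x w = G.dist y w + 1 := by
  classical
  obtain ⟨p, hp⟩ := hc.exists_walk_length_eq_dist x w
  have hy : y ∈ p.support := hosa p hp
  have hlen : (p.takeUntil y hy).length + (p.dropUntil y hy).length = G.dist x w := by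
    rw [← SimpleGraph.Walk.length_append, p.take_spec hy, hp]
  have h2 : G.dist y w ≤ (p.dropUntil y hy).length := SimpleGraph.dist_le _
  have h3 : (p.takeUntil y hy).length ≠ 0 := by
    intro h0
    exact hadj.symm.ne (SimpleGraph.Walk.eq_of_length_eq_zero h0)
  have h4 : G.dist x w ≤ G.dist y w + 1 := by
    obtain ⟨q, hq⟩ := hc.exists_walk_length_eq_dist y w
    have := SimpleGraph.dist_le (SimpleGraph.Walk.cons hadj.symm q)
    simpa [hq] using this
  omega

lemma child_uniq (hc : G.Connected) {y x z : V} (hadj : G.Adj y x)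
    (hosa : OnAllShortest G w y x) (hz : G.Adj z x)
    (hdz : G.dist z w + 1 = G.dist x w) : z = y := by
  classical
  have hdy : G.dist x w = G.dist y w + 1 := child_depth hc hadj hosa
  obtain ⟨q, hq⟩ := hc.exists_walk_length_eq_dist z w
  have hlen : (SimpleGraph.Walk.cons hz.symm q).length = G.dist x w := by
    rw [SimpleGraph.Walk.length_cons, hq]
    omega
  have hy : y ∈ (SimpleGraph.Walk.cons hz.symm q).support := hosa _ hlen
  rw [SimpleGraph.Walk.support_cons] at hy
  rcases List.mem_cons.mp hy with he | hy
  · exfalso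
    subst he
    omega
  · have hlen2 : (q.takeUntil y hy).length + (q.dropUntil y hy).length = G.dist z w := by
      rw [← SimpleGraph.Walk.length_append, q.take_spec hy, hq]
    have h2 : G.dist y w ≤ (q.dropUntil y hy).length := SimpleGraph.dist_le _
    have h3 : (q.takeUntil y hy).length = 0 := by omega
    exact SimpleGraph.Walk.eq_of_length_eq_zero h3

lemma exists_nice (hc : G.Connected)
    (htl : ∀ y, ∃ x, G.Adj y x ∧ OnAllShortest G w y x) : ∃ c : V → V, Nice G w c := by
  refine ⟨fun y => (htl y).choose, ?_, fun y => (htl y).choose_spec.1, ?_, ?_⟩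
  · exact hc
  · exact fun y => child_depth hc (htl y).choose_spec.1 (htl y).choose_spec.2
  · exact fun y z hz hd =>
      child_uniq hc (htl y).choose_spec.1 (htl y).choose_spec.2 hz hd

lemma aleph0_le_two_pow : (Cardinal.aleph0.{u}) ≤ 2 ^ Cardinal.aleph0.{u} :=
  (Cardinal.cantor _).le

lemma two_pow_mul_two_pow :
    ((2 : Cardinal.{u}) ^ Cardinal.aleph0.{u}) * (2 : Cardinal.{u}) ^ Cardinal.aleph0.{u} =
      (2 : Cardinal.{u}) ^ Cardinal.aleph0.{u} := by
  rw [← Cardinal.power_add, Cardinal.aleph0_add_aleph0]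

lemma mk_V_le (hc : G.Connected) (w : V)
    (hdeg : ∀ v, Cardinal.mk (G.neighborSet v) ≤ 2 ^ Cardinal.aleph0) :
    Cardinal.mk V ≤ 2 ^ Cardinal.aleph0 := by
  classical
  set L : ℕ → Set V := fun n => {v | G.dist v w = n} with hL
  have hLn : ∀ n, Cardinal.mk (L n) ≤ 2 ^ Cardinal.aleph0 := by
    intro n
    induction n with
    | zero =>
      have hsub : L 0 ⊆ {w} := by
        intro v hv
        have h0 : G.dist v w = 0 := hv
        have := (hc.dist_eq_zero_iff).mp h0
        simp [this]
      calc Cardinal.mk (L 0) ≤ Cardinal.mk ({w} : Set V) :=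
            Cardinal.mk_le_mk_of_subset hsub
        _ = 1 := Cardinal.mk_singleton w
        _ ≤ 2 ^ Cardinal.aleph0 :=
            le_trans Cardinal.one_le_aleph0 aleph0_le_two_pow
    | succ n ih =>
      have hexists : ∀ v : L (n + 1), ∃ p : V, G.Adj p (v : V) ∧ G.dist p w = n := by
        rintro ⟨v, hv⟩
        have hvn : G.dist v w = n + 1 := hv
        have hvw : v ≠ w := by
          intro he
          rw [he, SimpleGraph.dist_self] at hvn
          omega
        obtain ⟨p, hp1, hp2⟩ := parent_exists hc hvw
        exact ⟨p, hp1, by omega⟩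
      choose pa hpa1 hpa2 using hexists
      let f : L (n + 1) → Σ p : L n, (G.neighborSet (p : V)) := fun v =>
        ⟨⟨pa v, hpa2 v⟩, ⟨(v : V), hpa1 v⟩⟩
      have hfinj : Function.Injective f := by
        intro a b hab
        have h1 : ((f a).2 : V) = ((f b).2 : V) := by rw [hab]
        exact Subtype.ext h1
      calc Cardinal.mk (L (n + 1)) ≤ Cardinal.mk (Σ p : L n, (G.neighborSet (p : V))) :=
            Cardinal.mk_le_of_injective hfinj
        _ = Cardinal.sum (fun p : L n => Cardinal.mk (G.neighborSet (p : V))) :=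
            Cardinal.mk_sigma _
        _ ≤ Cardinal.sum (fun _ : L n => 2 ^ Cardinal.aleph0) :=
            Cardinal.sum_le_sum _ _ (fun p => hdeg _)
        _ = Cardinal.mk (L n) * 2 ^ Cardinal.aleph0 := Cardinal.sum_const' _ _
        _ ≤ (2 ^ Cardinal.aleph0) * 2 ^ Cardinal.aleph0 := mul_le_mul_left ih _
        _ = 2 ^ Cardinal.aleph0 := two_pow_mul_two_pow
  have hcover : (Set.univ : Set V) = ⋃ n : ULift.{u} ℕ, L n.down := by
    ext v
    simp only [Set.mem_univ, true_iff, Set.mem_iUnion]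
    exact ⟨ULift.up (G.dist v w), rfl⟩
  calc Cardinal.mk V = Cardinal.mk (Set.univ : Set V) := Cardinal.mk_univ.symm
    _ = Cardinal.mk (⋃ n : ULift.{u} ℕ, L n.down) := by rw [hcover]
    _ ≤ Cardinal.mk (ULift.{u} ℕ) * ⨆ n : ULift.{u} ℕ, Cardinal.mk (L n.down) :=
        Cardinal.mk_iUnion_le _
    _ ≤ Cardinal.aleph0 * 2 ^ Cardinal.aleph0 := by
        refine mul_le_mul' ?_ ?_
        · rw [Cardinal.mk_uLift, Cardinal.mk_nat, Cardinal.lift_aleph0]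
        · exact ciSup_le' (fun n => hLn n.down)
    _ ≤ (2 ^ Cardinal.aleph0) * 2 ^ Cardinal.aleph0 :=
        mul_le_mul_left aleph0_le_two_pow _
    _ = 2 ^ Cardinal.aleph0 := two_pow_mul_two_pow

lemma exists_name (hle : Cardinal.mk V ≤ 2 ^ Cardinal.aleph0.{u}) :
    ∃ name : V → ℕ → Bool, Function.Injective name := by
  have hb : Cardinal.mk (ULift.{u} Bool) = 2 := by
    rw [Cardinal.mk_uLift]
    simp
  have hn : Cardinal.mk (ULift.{u} ℕ) = Cardinal.aleph0 := by
    rw [Cardinal.mk_uLift, Cardinal.mk_nat, Cardinal.lift_aleph0]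
  have harrow : Cardinal.mk (ULift.{u} ℕ → ULift.{u} Bool) = 2 ^ Cardinal.aleph0.{u} := by
    rw [← Cardinal.power_def, hb, hn]
  rw [← harrow, Cardinal.le_def] at hle
  obtain ⟨emb⟩ := hle
  refine ⟨fun v n => (emb v (ULift.up n)).down, ?_⟩
  intro a b hab
  apply emb.injective
  funext x
  have := congrFun hab x.down
  exact ULift.ext _ _ this

end TLA

/-- A tree-like graph with degrees at most `2^ℵ₀` has exactly
`2^{|V(G)|}` inequivalent asymmetrizing sets; in particular it is asymmetrizable. -/

theorem tree_like_asym (G : SimpleGraph V) (hc : G.Connected) (w : V)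
    (htl : ∀ y, ∃ x, G.Adj y x ∧ OnAllShortest G w y x)
    (hdeg : ∀ v, Cardinal.mk (G.neighborSet v) ≤ 2 ^ Cardinal.aleph0) :
    asymNumber G = 2 ^ Cardinal.mk V ∧ ∃ S : Set V, IsAsymmetrizing G S := by
  classical
  obtain ⟨c, hN⟩ := TLA.exists_nice hc htl
  obtain ⟨name, hname⟩ := TLA.exists_name (TLA.mk_V_le hc w hdeg)
  let SAf : Set V → Set V := fun A => TLA.SA w c (TLA.datf name c A)
  have hasym : ∀ A, IsAsymmetrizing G (SAf A) := by
    intro A φ hφ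
    exact (hN.master hname A A φ (fun v => (hφ v).symm)).1
  constructor
  · refine le_antisymm ?_ ?_
    · calc asymNumber G ≤ Cardinal.mk {S : Set V // IsAsymmetrizing G S} :=
            Cardinal.mk_quot_le
        _ ≤ Cardinal.mk (Set V) := Cardinal.mk_subtype_le _
        _ = 2 ^ Cardinal.mk V := Cardinal.mk_set
    · set r : {S : Set V // IsAsymmetrizing G S} → {S : Set V // IsAsymmetrizing G S} → Prop :=
        fun S S' => ∃ φ : G ≃g G, (fun v => φ v) '' S.1 = S'.1 with hr
      have hequiv : Equivalence r := by
        constructor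
        · intro S
          exact ⟨RelIso.refl _, by simp⟩
        · rintro S S' ⟨φ, hφ⟩
          refine ⟨φ.symm, ?_⟩
          rw [← hφ, Set.image_image]
          simp
        · rintro S S' S'' ⟨φ, hφ⟩ ⟨ψ, hψ⟩
          refine ⟨φ.trans ψ, ?_⟩
          rw [← hψ, ← hφ, Set.image_image]
          rfl
      have hkey : ∀ A B : Set V, r ⟨SAf A, hasym A⟩ ⟨SAf B, hasym B⟩ → A = B := by
        rintro A B ⟨φ, hφ⟩
        simp only [] at hφ
        change (fun v => φ v) '' SAf A = SAf B at hφ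
        have hpres : ∀ v, v ∈ SAf A ↔ φ v ∈ SAf B := by
          intro v
          constructor
          · intro hv
            rw [← hφ]
            exact ⟨v, hv, rfl⟩
          · intro hv
            rw [← hφ] at hv
            obtain ⟨a, ha, hav⟩ := hv
            have : a = v := φ.injective hav
            rwa [← this]
        exact (hN.master hname A B φ hpres).2
      have hinj : Function.Injective (fun A : Set V => Quot.mk r ⟨SAf A, hasym A⟩) := by
        intro A B hAB
        have h1 := Quot.eq.mp hAB
        rw [hequiv.eqvGen_iff] at h1
        exact hkey A B h1
      calc (2 : Cardinal.{u}) ^ Cardinal.mk V = Cardinal.mk (Set V) := Cardinal.mk_set.symm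
        _ ≤ asymNumber G := Cardinal.mk_le_of_injective hinj
  · exact ⟨SAf ∅, hasym ∅⟩
end
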